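/- arXiv:1912.13259 — 5 statements merged into one kernel-verified Lean document; each statement's English description precedes it below -/
import Mathlib

section
/- Let (O, μ) be a measure space, H = L²(O, μ), and let A be a linear maximal monotone operator on H whose resolvent J_λ = (I+λA)^{-1} is sub-Markovian (i.e. 0 ≤ φ ≤ 1 a.e. implies 0 ≤ J_λ φ ≤ 1 a.e.) and is a contraction in the L¹(O,μ)-norm. Let β : ℝ → ℝ be continuous, nondecreasing, bounded, with β(0) = 0. Then for every v ∈ D(A), ⟨Av, β(v)⟩_{L²} ≥ 0. -/
open MeasureTheory Filter
open scoped ENNReal RealInnerProductSpace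

open scoped Topology

section Aux
variable {O : Type*} [MeasurableSpace O] {μ : Measure O}
  (T : Lp ℝ 2 μ →L[ℝ] Lp ℝ 2 μ)

/-- scaled sub-Markov property -/
theorem BS_subc
    (hsub : ∀ φ : Lp ℝ 2 μ, (∀ᵐ x ∂μ, 0 ≤ φ x ∧ φ x ≤ 1) → (∀ᵐ x ∂μ, 0 ≤ T φ x ∧ T φ x ≤ 1))
    {c : ℝ} (hc : 0 < c) (φ : Lp ℝ 2 μ) (hφ : ∀ᵐ x ∂μ, 0 ≤ φ x ∧ φ x ≤ c) :
    ∀ᵐ x ∂μ, 0 ≤ T φ x ∧ T φ x ≤ c := by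
  have h1 : ∀ᵐ x ∂μ, 0 ≤ (c⁻¹ • φ) x ∧ (c⁻¹ • φ) x ≤ 1 := by
    filter_upwards [Lp.coeFn_smul c⁻¹ φ, hφ] with x hx hφx
    rw [hx]
    simp only [Pi.smul_apply, smul_eq_mul]
    constructor
    · exact mul_nonneg (by positivity) hφx.1
    · rw [inv_mul_le_iff₀ hc, mul_one]; exact hφx.2
  have h2 := hsub _ h1
  have h3 : T (c⁻¹ • φ) = c⁻¹ • T φ := map_smul T c⁻¹ φ
  rw [h3] at h2
  filter_upwards [Lp.coeFn_smul c⁻¹ (T φ), h2] with x hx h2x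
  rw [hx] at h2x
  simp only [Pi.smul_apply, smul_eq_mul] at h2x
  have hci : (0:ℝ) < c⁻¹ := inv_pos.2 hc
  constructor
  · exact nonneg_of_mul_nonneg_right h2x.1 hci
  · have h := (inv_mul_le_iff₀ hc).1 h2x.2
    rwa [mul_one] at h


theorem BS_snorm_two (f : O → ℝ) :
    eLpNorm f 2 μ = (∫⁻ x, (‖f x‖₊ : ℝ≥0∞) ^ (2:ℕ) ∂μ) ^ (1/(2:ℝ)) := by
  rw [eLpNorm_eq_lintegral_rpow_enorm_toReal two_ne_zero ENNReal.ofNat_ne_top]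
  have h2 : ((2:ℝ≥0∞).toReal) = (2:ℝ) := by simp
  rw [h2]
  congr 1
  refine lintegral_congr fun x => ?_
  rw [← ENNReal.rpow_natCast]
  norm_num
  rfl

theorem BS_pos
    (hsub : ∀ φ : Lp ℝ 2 μ, (∀ᵐ x ∂μ, 0 ≤ φ x ∧ φ x ≤ 1) → (∀ᵐ x ∂μ, 0 ≤ T φ x ∧ T φ x ≤ 1))
    (g : Lp ℝ 2 μ) (hg : ∀ᵐ x ∂μ, 0 ≤ g x) :
    ∀ᵐ x ∂μ, 0 ≤ T g x := by
  classical
  obtain ⟨g', hg'm, hg'e⟩ : ∃ g', StronglyMeasurable g' ∧ ⇑g =ᵐ[μ] g' :=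
    ⟨(Lp.aestronglyMeasurable g).mk _, (Lp.aestronglyMeasurable g).stronglyMeasurable_mk,
      (Lp.aestronglyMeasurable g).ae_eq_mk⟩
  have hg' : ∀ᵐ x ∂μ, 0 ≤ g' x := by filter_upwards [hg, hg'e] with x h1 h2; rw [← h2]; exact h1
  set gn : ℕ → O → ℝ := fun n x => max (min (g' x) n) 0 with hgn_def
  have hgn_sm : ∀ n, StronglyMeasurable (gn n) := fun n =>
    ((hg'm.measurable.min measurable_const).max measurable_const).stronglyMeasurable
  have hbound : ∀ (n : ℕ) (x : O), ‖gn n x‖ ≤ ‖g' x‖ := by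
    intro n x
    have h0 : (0:ℝ) ≤ max (min (g' x) n) 0 := le_max_right _ _
    have h1 : max (min (g' x) n) 0 ≤ |g' x| :=
      max_le ((min_le_left _ _).trans (le_abs_self _)) (abs_nonneg _)
    rw [Real.norm_eq_abs, Real.norm_eq_abs, abs_of_nonneg h0]
    exact h1
  have hmem : ∀ n, MemLp (gn n) 2 μ := fun n =>
    (Lp.memLp g).of_le (hgn_sm n).aestronglyMeasurable
      (by filter_upwards [hg'e] with x hx; rw [hx]; exact hbound n x)
  set GN : ℕ → Lp ℝ 2 μ := fun n => (hmem n).toLp (gn n) with hGN_def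
  -- positivity of each truncation image
  have hTpos : ∀ n, ∀ᵐ x ∂μ, 0 ≤ T (GN n) x := by
    intro n
    have hc : (0:ℝ) < (n:ℝ) + 1 := by positivity
    have h := BS_subc T hsub hc (GN n) ?_
    · exact h.mono fun x hx => hx.1
    · filter_upwards [(hmem n).coeFn_toLp] with x hx
      rw [hx]
      refine ⟨le_max_right _ _, ?_⟩
      exact max_le ((min_le_right _ _).trans (by linarith)) (by positivity)
  -- L² convergence of truncations
  have hI : Tendsto (fun n => ∫⁻ x, (‖gn n x - g' x‖₊ : ℝ≥0∞) ^ (2:ℕ) ∂μ) atTop (𝓝 0) := by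
    have h0 : (0:ℝ≥0∞) = ∫⁻ (_ : O), (0:ℝ≥0∞) ∂μ := by simp
    rw [h0]
    refine tendsto_lintegral_of_dominated_convergence (fun x => (‖g' x‖₊ : ℝ≥0∞) ^ (2:ℕ))
      (fun n => (((hgn_sm n).sub hg'm).measurable.enorm).pow_const 2) ?_ ?_ ?_
    · intro n
      filter_upwards [hg'] with x hx
      have hle : ‖gn n x - g' x‖ ≤ ‖g' x‖ := by
        have h1 : 0 ≤ gn n x := le_max_right _ _
        have h2 : gn n x ≤ g' x := max_le (min_le_left _ _) hx
        rw [Real.norm_eq_abs, Real.norm_eq_abs, abs_le]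
        constructor <;> [linarith [abs_nonneg (g' x), le_abs_self (g' x)];
          linarith [le_abs_self (g' x)]]
      have : ‖gn n x - g' x‖₊ ≤ ‖g' x‖₊ := by
        rw [← NNReal.coe_le_coe]; simpa using hle
      exact pow_le_pow_left' (by exact_mod_cast this) 2
    · -- finiteness of the dominating integral
      have hfin : eLpNorm g' 2 μ < ∞ := by
        rw [← eLpNorm_congr_ae hg'e]; exact (Lp.memLp g).2
      rw [BS_snorm_two] at hfin
      intro htop
      rw [htop] at hfin
      simp [ENNReal.top_rpow_of_pos (by norm_num : (0:ℝ) < 1/2)] at hfin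
    · filter_upwards [hg'] with x hx
      refine tendsto_atTop_of_eventually_const (i₀ := ⌈g' x⌉₊) fun n hn => ?_
      have h1 : g' x ≤ (n:ℝ) := (Nat.le_ceil _).trans (by exact_mod_cast hn)
      have : gn n x = g' x := by
        rw [hgn_def]; simp only; rw [min_eq_left h1, max_eq_left hx]
      simp [this]
  have hGNconv : Tendsto GN atTop (𝓝 g) := by
    rw [Lp.tendsto_Lp_iff_tendsto_eLpNorm']
    have heq : ∀ n, eLpNorm (⇑(GN n) - ⇑g) 2 μ
        = (∫⁻ x, (‖gn n x - g' x‖₊ : ℝ≥0∞) ^ (2:ℕ) ∂μ) ^ (1/(2:ℝ)) := by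
      intro n
      rw [eLpNorm_congr_ae (f := ⇑(GN n) - ⇑g) (g := fun x => gn n x - g' x), BS_snorm_two]
      filter_upwards [(hmem n).coeFn_toLp, hg'e] with x h1 h2
      simp [h1, h2]
      exact h1
    simp only [heq]
    rw [ENNReal.tendsto_nhds_zero]
    intro ε hε
    have hε2 : (0:ℝ≥0∞) < ε ^ (2:ℕ) := pos_iff_ne_zero.2 (pow_ne_zero 2 hε.ne')
    filter_upwards [(ENNReal.tendsto_nhds_zero.1 hI) (ε ^ (2:ℕ)) hε2] with n hn
    calc (∫⁻ x, (‖gn n x - g' x‖₊ : ℝ≥0∞) ^ (2:ℕ) ∂μ) ^ (1/(2:ℝ))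
        ≤ (ε ^ (2:ℕ)) ^ (1/(2:ℝ)) := ENNReal.rpow_le_rpow hn (by norm_num)
      _ = ε := by
          rw [← ENNReal.rpow_natCast ε 2, ← ENNReal.rpow_mul]
          norm_num
  have hTconv : Tendsto (fun n => T (GN n)) atTop (𝓝 (T g)) :=
    (T.continuous.tendsto g).comp hGNconv
  have hTmeas : TendstoInMeasure μ (fun n => ⇑(T (GN n))) atTop (⇑(T g)) := by
    refine tendstoInMeasure_of_tendsto_eLpNorm (p := 2) two_ne_zero
      (fun n => Lp.aestronglyMeasurable _) (Lp.aestronglyMeasurable _) ?_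
    exact (Lp.tendsto_Lp_iff_tendsto_eLpNorm' _ _).1 hTconv
  obtain ⟨ns, -, hae⟩ := hTmeas.exists_seq_tendsto_ae
  have hall : ∀ᵐ x ∂μ, ∀ n, 0 ≤ T (GN n) x := (ae_all_iff).2 hTpos
  filter_upwards [hae, hall] with x hx hposx
  exact ge_of_tendsto hx (Eventually.of_forall fun i => hposx (ns i))

end Aux

section Aux2
variable {O : Type*} [MeasurableSpace O] {μ : Measure O}
  (T : Lp ℝ 2 μ →L[ℝ] Lp ℝ 2 μ)

theorem BS_d
    (hsub : ∀ φ : Lp ℝ 2 μ, (∀ᵐ x ∂μ, 0 ≤ φ x ∧ φ x ≤ 1) → (∀ᵐ x ∂μ, 0 ≤ T φ x ∧ T φ x ≤ 1))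
    (hL1 : ∀ φ : Lp ℝ 2 μ, eLpNorm (⇑(T φ)) 1 μ ≤ eLpNorm (⇑φ) 1 μ)
    (f : Lp ℝ 2 μ) (f' : O → ℝ) (hf'm : StronglyMeasurable f') (hef : ⇑f =ᵐ[μ] f')
    {t : ℝ} (ht : 0 < t) :
    (∫ x, max (T f x - t) 0 ∂μ) ≤ ∫ x, max (f' x - t) 0 ∂μ := by
  classical
  -- decompose f' = P + M₁ - M₂
  set P : O → ℝ := fun x => max (f' x - t) 0 with hP_def
  set M₁ : O → ℝ := fun x => max (min (f' x) t) 0 with hM1_def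
  set M₂ : O → ℝ := fun x => max (-f' x) 0 with hM2_def
  have hdecomp : ∀ x, f' x = P x + M₁ x - M₂ x := by
    intro x
    show f' x = max (f' x - t) 0 + max (min (f' x) t) 0 - max (-f' x) 0
    rcases le_or_gt (f' x) 0 with h | h
    · rw [max_eq_right (by linarith : f' x - t ≤ 0),
        min_eq_left (by linarith : f' x ≤ t), max_eq_right h,
        max_eq_left (by linarith : (0:ℝ) ≤ -f' x)]
      ring
    · rcases le_or_gt (f' x) t with h2 | h2
      · rw [max_eq_right (by linarith : f' x - t ≤ 0), min_eq_left h2,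
          max_eq_left h.le, max_eq_right (by linarith : -f' x ≤ 0)]
        ring
      · rw [max_eq_left (by linarith : (0:ℝ) ≤ f' x - t), min_eq_right h2.le,
          max_eq_left ht.le, max_eq_right (by linarith : -f' x ≤ 0)]
        ring
  -- memℒp facts
  have hfmem : MemLp f' 2 μ := (Lp.memLp f).ae_eq hef
  have hPm : StronglyMeasurable P :=
    ((hf'm.measurable.sub measurable_const).max measurable_const).stronglyMeasurable
  have hM1m : StronglyMeasurable M₁ :=
    ((hf'm.measurable.min measurable_const).max measurable_const).stronglyMeasurable
  have hM2m : StronglyMeasurable M₂ :=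
    (hf'm.measurable.neg.max measurable_const).stronglyMeasurable
  have habsP : ∀ x, ‖P x‖ ≤ ‖f' x‖ := by
    intro x
    rw [Real.norm_eq_abs, Real.norm_eq_abs, abs_of_nonneg (le_max_right _ _)]
    exact max_le (by cases abs_cases (f' x) <;> linarith) (abs_nonneg _)
  have habsM1 : ∀ x, ‖M₁ x‖ ≤ ‖f' x‖ := by
    intro x
    rw [Real.norm_eq_abs, Real.norm_eq_abs, abs_of_nonneg (le_max_right _ _)]
    refine max_le ((min_le_left _ _).trans (le_abs_self _)) (abs_nonneg _)
  have habsM2 : ∀ x, ‖M₂ x‖ ≤ ‖f' x‖ := by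
    intro x
    rw [Real.norm_eq_abs, Real.norm_eq_abs, abs_of_nonneg (le_max_right _ _)]
    exact max_le (by cases abs_cases (f' x) <;> linarith) (abs_nonneg _)
  have hPmem : MemLp P 2 μ := hfmem.of_le hPm.aestronglyMeasurable (.of_forall (habsP))
  have hM1mem : MemLp M₁ 2 μ := hfmem.of_le hM1m.aestronglyMeasurable (.of_forall (habsM1))
  have hM2mem : MemLp M₂ 2 μ := hfmem.of_le hM2m.aestronglyMeasurable (.of_forall (habsM2))
  set PL := hPmem.toLp P
  set M1L := hM1mem.toLp M₁
  set M2L := hM2mem.toLp M₂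
  have hfL : f = PL + M1L - M2L := by
    apply Lp.ext
    filter_upwards [hef, Lp.coeFn_sub (PL + M1L) M2L, Lp.coeFn_add PL M1L,
      hPmem.coeFn_toLp, hM1mem.coeFn_toLp, hM2mem.coeFn_toLp] with x h0 h1 h2 h3 h4 h5
    rw [h0, h1, Pi.sub_apply, h2, Pi.add_apply, h3, h4, h5]
    exact hdecomp x
  -- images
  have hTM1 : ∀ᵐ x ∂μ, 0 ≤ T M1L x ∧ T M1L x ≤ t := by
    refine BS_subc T hsub ht M1L ?_
    filter_upwards [hM1mem.coeFn_toLp] with x hx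
    rw [hx]
    exact ⟨le_max_right _ _, max_le (min_le_right _ _) ht.le⟩
  have hTM2 : ∀ᵐ x ∂μ, 0 ≤ T M2L x := by
    refine BS_pos T hsub M2L ?_
    filter_upwards [hM2mem.coeFn_toLp] with x hx
    rw [hx]; exact le_max_right _ _
  -- key pointwise bound:  max (Tf x - t) 0 ≤ |T PL x|
  have hkey : ∀ᵐ x ∂μ, max (T f x - t) 0 ≤ |T PL x| := by
    have hTf : T f = T PL + T M1L - T M2L := by
      rw [hfL]; simp [map_add, map_sub]
    filter_upwards [hTM1, hTM2, Lp.coeFn_sub (T PL + T M1L) (T M2L),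
      Lp.coeFn_add (T PL) (T M1L)] with x h1 h2 h3 h4
    have hTfx : T f x = T PL x + T M1L x - T M2L x := by
      rw [hTf, h3, Pi.sub_apply, h4, Pi.add_apply]
    have : T f x - t ≤ T PL x := by rw [hTfx]; linarith [h1.2, h2]
    exact max_le (this.trans (le_abs_self _)) (abs_nonneg _)
  -- integrability
  have hPint : Integrable P μ := by
    refine Integrable.mono' ((hfmem.integrable_sq).div_const t) hPm.aestronglyMeasurable
      (.of_forall fun x => ?_)
    rw [Real.norm_eq_abs, abs_of_nonneg (le_max_right _ _)]
    rcases le_or_gt (f' x) t with h | h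
    · have : (0:ℝ) ≤ f' x ^ 2 / t := by positivity
      refine max_le (by linarith) this
    · refine max_le ?_ (by positivity)
      rw [le_div_iff₀ ht]
      nlinarith [ht, h]
  -- L¹ facts
  have hTPL_mem1 : MemLp (⇑(T PL)) 1 μ := by
    refine ⟨Lp.aestronglyMeasurable _, ?_⟩
    refine lt_of_le_of_lt (hL1 PL) ?_
    rw [eLpNorm_congr_ae hPmem.coeFn_toLp]
    exact (memLp_one_iff_integrable.2 hPint).2
  have hTPL_int : Integrable (⇑(T PL)) μ := memLp_one_iff_integrable.1 hTPL_mem1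
  have hLHSasm : AEStronglyMeasurable (fun x => max (T f x - t) 0) μ := by
    have hc : Continuous fun r : ℝ => max (r - t) 0 :=
      (continuous_id.sub continuous_const).max continuous_const
    exact hc.comp_aestronglyMeasurable (Lp.aestronglyMeasurable (T f))
  have hLHSint : Integrable (fun x => max (T f x - t) 0) μ := by
    refine Integrable.mono' hTPL_int.abs hLHSasm ?_
    filter_upwards [hkey] with x hx
    rw [Real.norm_eq_abs, abs_of_nonneg (le_max_right _ _)]
    exact hx
  have h1 : (∫ x, max (T f x - t) 0 ∂μ) ≤ ∫ x, |T PL x| ∂μ :=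
    integral_mono_ae hLHSint hTPL_int.abs hkey
  have h2 : (∫ x, |T PL x| ∂μ) ≤ ∫ x, P x ∂μ := by
    have e1 : ∫ x, |T PL x| ∂μ = (eLpNorm (⇑(T PL)) 1 μ).toReal := by
      rw [eLpNorm_one_eq_lintegral_enorm,
        ← integral_norm_eq_lintegral_enorm (Lp.aestronglyMeasurable (T PL))]
      simp [Real.norm_eq_abs]
    have e2 : ∫ x, P x ∂μ = (eLpNorm P 1 μ).toReal := by
      rw [eLpNorm_one_eq_lintegral_enorm,
        ← integral_norm_eq_lintegral_enorm hPm.aestronglyMeasurable]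
      refine integral_congr_ae (.of_forall fun x => ?_)
      show P x = ‖P x‖
      rw [Real.norm_eq_abs, abs_of_nonneg (le_max_right _ _)]
    rw [e1, e2]
    refine ENNReal.toReal_mono ((memLp_one_iff_integrable.2 hPint).2).ne ?_
    calc eLpNorm (⇑(T PL)) 1 μ ≤ eLpNorm (⇑PL) 1 μ := hL1 PL
      _ = eLpNorm P 1 μ := eLpNorm_congr_ae hPmem.coeFn_toLp
  exact h1.trans h2

end Aux2


section Aux3
variable {O : Type*} [MeasurableSpace O] {μ : Measure O}
  (T : Lp ℝ 2 μ →L[ℝ] Lp ℝ 2 μ)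

/-- product of two L² functions is integrable -/
theorem BS_mul_int {f g : O → ℝ} (hf : MemLp f 2 μ) (hg : MemLp g 2 μ) :
    Integrable (fun x => f x * g x) μ := by
  have h := L2.integrable_inner (𝕜 := ℝ) (hf.toLp f) (hg.toLp g)
  refine h.congr ?_
  filter_upwards [hf.coeFn_toLp, hg.coeFn_toLp] with x h1 h2
  rw [h1, h2]
  simp [RCLike.inner_apply, conj_trivial]
  ring

theorem BS_K
    (hsub : ∀ φ : Lp ℝ 2 μ, (∀ᵐ x ∂μ, 0 ≤ φ x ∧ φ x ≤ 1) → (∀ᵐ x ∂μ, 0 ≤ T φ x ∧ T φ x ≤ 1))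
    (hL1 : ∀ φ : Lp ℝ 2 μ, eLpNorm (⇑(T φ)) 1 μ ≤ eLpNorm (⇑φ) 1 μ)
    (f : Lp ℝ 2 μ) (f' h' : O → ℝ) (hf'm : StronglyMeasurable f') (hh'm : StronglyMeasurable h')
    (hef : ⇑f =ᵐ[μ] f') (heh : ⇑(T f) =ᵐ[μ] h') {t : ℝ} (ht : 0 < t) :
    0 ≤ ∫ x, (if t < f' x then (1:ℝ) else 0) * (f' x - h' x) ∂μ := by
  classical
  have hf2 : MemLp f' 2 μ := (Lp.memLp f).ae_eq hef
  have hh2 : MemLp h' 2 μ := (Lp.memLp (T f)).ae_eq heh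
  set A : O → ℝ := fun x => max (f' x - t) 0 with hA_def
  set B : O → ℝ := fun x => max (h' x - t) 0 with hB_def
  have hAm : StronglyMeasurable A :=
    ((hf'm.measurable.sub measurable_const).max measurable_const).stronglyMeasurable
  have hBm : StronglyMeasurable B :=
    ((hh'm.measurable.sub measurable_const).max measurable_const).stronglyMeasurable
  have hint_sq : ∀ (u : O → ℝ), MemLp u 2 μ → StronglyMeasurable u →
      Integrable (fun x => max (u x - t) 0) μ := by
    intro u hu hum
    refine Integrable.mono' ((hu.integrable_sq).div_const t)
      (((hum.measurable.sub measurable_const).max measurable_const).stronglyMeasurable).aestronglyMeasurable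
      (.of_forall fun x => ?_)
    rw [Real.norm_eq_abs, abs_of_nonneg (le_max_right _ _)]
    rcases le_or_gt (u x) t with h | h
    · have : (0:ℝ) ≤ u x ^ 2 / t := by positivity
      exact max_le (by linarith) this
    · refine max_le ?_ (by positivity)
      rw [le_div_iff₀ ht]
      nlinarith [ht, h]
  have hAint : Integrable A μ := hint_sq f' hf2 hf'm
  have hBint : Integrable B μ := hint_sq h' hh2 hh'm
  -- the integrand and its integrability
  set G : O → ℝ := fun x => (if t < f' x then (1:ℝ) else 0) * (f' x - h' x) with hG_def
  have hGm : StronglyMeasurable G := by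
    refine Measurable.stronglyMeasurable ?_
    exact (Measurable.ite (measurableSet_lt measurable_const hf'm.measurable)
      measurable_const measurable_const).mul (hf'm.measurable.sub hh'm.measurable)
  have hGint : Integrable G μ := by
    have hbig : Integrable (fun x => (1/t) * (|f' x| * |f' x - h' x|)) μ := by
      refine Integrable.const_mul ?_ _
      have := BS_mul_int hf2 (hf2.sub hh2)
      exact this.abs.congr (.of_forall fun x => by
        simp [abs_mul, Pi.sub_apply])
    refine Integrable.mono' hbig hGm.aestronglyMeasurable (.of_forall fun x => ?_)
    rw [hG_def]
    simp only [Real.norm_eq_abs]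
    rcases lt_or_ge t (f' x) with h | h
    · rw [if_pos h, one_mul]
      have h1 : (1:ℝ) ≤ (1/t) * |f' x| := by
        have hfx : t ≤ |f' x| := h.le.trans (le_abs_self _)
        rw [div_mul_eq_mul_div, one_mul, le_div_iff₀ ht, one_mul]
        exact hfx
      nlinarith [abs_nonneg (f' x - h' x), abs_nonneg (f' x)]
    · rw [if_neg (not_lt.2 h), zero_mul, abs_zero]
      positivity
  -- pointwise inequality
  have hptwise : ∀ x, A x - B x ≤ G x := by
    intro x
    rw [hG_def, hA_def, hB_def]
    simp only
    rcases lt_or_ge t (f' x) with h | h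
    · rw [if_pos h, one_mul, max_eq_left (by linarith : (0:ℝ) ≤ f' x - t)]
      rcases le_or_gt (h' x) t with h2 | h2
      · rw [max_eq_right (by linarith : h' x - t ≤ 0)]; linarith
      · rw [max_eq_left (by linarith : (0:ℝ) ≤ h' x - t)]; linarith
    · rw [if_neg (not_lt.2 h), zero_mul, max_eq_right (by linarith : f' x - t ≤ 0)]
      have : (0:ℝ) ≤ max (h' x - t) 0 := le_max_right _ _
      linarith
  have hd : (∫ x, B x ∂μ) ≤ ∫ x, A x ∂μ := by
    have := BS_d T hsub hL1 f f' hf'm hef ht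
    have heB : (∫ x, max (T f x - t) 0 ∂μ) = ∫ x, B x ∂μ := by
      refine integral_congr_ae ?_
      filter_upwards [heh] with x hx
      rw [hB_def]; simp only; rw [hx]
    rw [heB] at this
    exact this
  have h3 : (∫ x, A x ∂μ) - (∫ x, B x ∂μ) ≤ ∫ x, G x ∂μ := by
    rw [← integral_sub hAint hBint]
    exact integral_mono_ae (hAint.sub hBint) hGint (.of_forall hptwise)
  linarith

theorem BS_K2
    (hsub : ∀ φ : Lp ℝ 2 μ, (∀ᵐ x ∂μ, 0 ≤ φ x ∧ φ x ≤ 1) → (∀ᵐ x ∂μ, 0 ≤ T φ x ∧ T φ x ≤ 1))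
    (hL1 : ∀ φ : Lp ℝ 2 μ, eLpNorm (⇑(T φ)) 1 μ ≤ eLpNorm (⇑φ) 1 μ)
    (f : Lp ℝ 2 μ) (f' h' : O → ℝ) (hf'm : StronglyMeasurable f') (hh'm : StronglyMeasurable h')
    (hef : ⇑f =ᵐ[μ] f') (heh : ⇑(T f) =ᵐ[μ] h') {s : ℝ} (hs : s < 0) :
    (∫ x, (if f' x < s then (1:ℝ) else 0) * (f' x - h' x) ∂μ) ≤ 0 := by
  classical
  have hef' : ⇑(-f) =ᵐ[μ] fun x => -f' x := by
    filter_upwards [Lp.coeFn_neg f, hef] with x h1 h2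
    rw [h1, Pi.neg_apply, h2]
  have heh' : ⇑(T (-f)) =ᵐ[μ] fun x => -h' x := by
    have : T (-f) = -(T f) := by simp [map_neg]
    rw [this]
    filter_upwards [Lp.coeFn_neg (T f), heh] with x h1 h2
    rw [h1, Pi.neg_apply, h2]
  have := BS_K T hsub hL1 (-f) (fun x => -f' x) (fun x => -h' x)
    hf'm.neg hh'm.neg hef' heh' (t := -s) (by linarith)
  have heq : (∫ x, (if -s < -f' x then (1:ℝ) else 0) * (-f' x - -h' x) ∂μ)
      = -∫ x, (if f' x < s then (1:ℝ) else 0) * (f' x - h' x) ∂μ := by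
    rw [← integral_neg]
    refine integral_congr_ae (.of_forall fun x => ?_)
    show (if -s < -f' x then (1:ℝ) else 0) * (-f' x - -h' x)
        = -((if f' x < s then (1:ℝ) else 0) * (f' x - h' x))
    rcases lt_or_ge (f' x) s with h | h
    · rw [if_pos h, if_pos (by linarith : -s < -f' x)]; ring
    · rw [if_neg (not_lt.2 h), if_neg (not_lt.2 (by linarith : -f' x ≤ -s))]; ring
  rw [heq] at this
  linarith

end Aux3

theorem BS_thr (β : ℝ → ℝ) (hβc : Continuous β) (hβm : Monotone β) (hβ0 : β 0 = 0)
    {c : ℝ} (hc : 0 < c) :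
    (∀ r, ¬ (c < β r)) ∨ ∃ t : ℝ, 0 < t ∧ ∀ r, (c < β r ↔ t < r) := by
  by_cases hS : ∃ r, c < β r
  · right
    set S : Set ℝ := {r | c < β r} with hS_def
    have hSne : S.Nonempty := hS
    have hS0 : ∀ r ∈ S, 0 < r := by
      intro r hr
      by_contra h
      push_neg at h
      have : β r ≤ 0 := hβ0 ▸ hβm h
      exact absurd hr (by simp only [hS_def, Set.mem_setOf_eq]; linarith)
    have hbdd : BddBelow S := ⟨0, fun r hr => (hS0 r hr).le⟩
    set t := sInf S with ht_def
    have ht0 : 0 ≤ t := le_csInf hSne fun r hr => (hS0 r hr).le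
    have hiff : ∀ r, c < β r ↔ t < r := by
      intro r
      constructor
      · intro hr
        -- find r' < r with c < β r'
        have hev : ∀ᶠ r' in 𝓝[<] r, c < β r' :=
          ((hβc.tendsto r).eventually_const_lt hr).filter_mono nhdsWithin_le_nhds
        obtain ⟨r', hc', hr'⟩ := (hev.and self_mem_nhdsWithin).exists
        exact lt_of_le_of_lt (csInf_le hbdd hc') hr'
      · intro hr
        obtain ⟨r', hr'S, hr'lt⟩ := exists_lt_of_csInf_lt hSne hr
        exact lt_of_lt_of_le hr'S (hβm hr'lt.le)
    refine ⟨t, ?_, hiff⟩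
    rcases ht0.lt_or_eq with h | h
    · exact h
    · exfalso
      have hseq : Tendsto (fun n : ℕ => β (1/((n:ℝ)+1))) atTop (𝓝 (β 0)) :=
        (hβc.tendsto 0).comp tendsto_one_div_add_atTop_nhds_zero_nat
      have hge : c ≤ β 0 := by
        refine ge_of_tendsto hseq (Eventually.of_forall fun n => ?_)
        have : t < 1/((n:ℝ)+1) := by rw [← h]; positivity
        exact ((hiff _).2 this).le
      rw [hβ0] at hge
      linarith
  · left
    push_neg at hS
    exact fun r => not_lt.2 (hS r)

theorem BS_count {n : ℕ} (hn : 1 ≤ n) {y : ℝ} (hy : 0 ≤ y) :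
    (n:ℝ)⁻¹ * ∑ k ∈ Finset.Icc 1 (n^2), (if (k:ℝ)/(n:ℝ) < y then (1:ℝ) else 0) ≤ y := by
  have hnpos : (0:ℝ) < n := by exact_mod_cast hn
  rw [Finset.sum_boole]
  have hsub : (Finset.Icc 1 (n^2)).filter (fun k : ℕ => (k:ℝ)/(n:ℝ) < y) ⊆
      Finset.Icc 1 (Nat.floor ((n:ℝ)*y)) := by
    intro k hk
    simp only [Finset.mem_filter, Finset.mem_Icc] at hk ⊢
    refine ⟨hk.1.1, Nat.le_floor ?_⟩
    have := hk.2
    rw [div_lt_iff₀ hnpos] at this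
    linarith [this]
  have hcard : ((Finset.Icc 1 (n^2)).filter (fun k : ℕ => (k:ℝ)/(n:ℝ) < y)).card
      ≤ Nat.floor ((n:ℝ)*y) := by
    have := Finset.card_le_card hsub
    simpa [Nat.card_Icc] using this
  have h2 : (((Finset.Icc 1 (n^2)).filter (fun k : ℕ => (k:ℝ)/(n:ℝ) < y)).card : ℝ)
      ≤ (n:ℝ) * y := by
    calc ((((Finset.Icc 1 (n^2)).filter (fun k : ℕ => (k:ℝ)/(n:ℝ) < y)).card : ℝ))
        ≤ (Nat.floor ((n:ℝ)*y) : ℝ) := by exact_mod_cast hcard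
      _ ≤ (n:ℝ)*y := Nat.floor_le (by positivity)
  rw [inv_mul_le_iff₀ hnpos]
  exact h2

theorem BS_count2 {n : ℕ} (hn : 1 ≤ n) {y : ℝ} (hy : 0 ≤ y) (hyn : y ≤ n) :
    y - 2/(n:ℝ) ≤ (n:ℝ)⁻¹ * ∑ k ∈ Finset.Icc 1 (n^2), (if (k:ℝ)/(n:ℝ) < y then (1:ℝ) else 0) := by
  have hnpos : (0:ℝ) < n := by exact_mod_cast hn
  rw [Finset.sum_boole]
  have hsub : Finset.Icc 1 (Nat.floor ((n:ℝ)*y) - 1) ⊆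
      (Finset.Icc 1 (n^2)).filter (fun k : ℕ => (k:ℝ)/(n:ℝ) < y) := by
    intro k hk
    simp only [Finset.mem_Icc] at hk
    have hk2 : k + 1 ≤ Nat.floor ((n:ℝ)*y) := by omega
    have hfl : (Nat.floor ((n:ℝ)*y) : ℝ) ≤ (n:ℝ)*y := Nat.floor_le (by positivity)
    have hkr : (k:ℝ) + 1 ≤ (n:ℝ)*y := by
      calc ((k:ℝ) + 1) ≤ (Nat.floor ((n:ℝ)*y) : ℝ) := by exact_mod_cast hk2
        _ ≤ (n:ℝ)*y := hfl
    have hkn2 : k ≤ n^2 := by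
      have h1 : Nat.floor ((n:ℝ)*y) ≤ n^2 := by
        refine Nat.floor_le_of_le ?_
        have : (n:ℝ)*y ≤ (n:ℝ)*(n:ℝ) := by nlinarith
        calc (n:ℝ)*y ≤ (n:ℝ)*(n:ℝ) := this
          _ = ((n^2 : ℕ) : ℝ) := by push_cast; ring
      omega
    simp only [Finset.mem_filter, Finset.mem_Icc]
    refine ⟨⟨hk.1, hkn2⟩, ?_⟩
    rw [div_lt_iff₀ hnpos]
    linarith
  have hcard : Nat.floor ((n:ℝ)*y) - 1 ≤
      ((Finset.Icc 1 (n^2)).filter (fun k : ℕ => (k:ℝ)/(n:ℝ) < y)).card := by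
    have := Finset.card_le_card hsub
    simpa [Nat.card_Icc] using this
  have h2 : (n:ℝ)*y - 2 ≤
      (((Finset.Icc 1 (n^2)).filter (fun k : ℕ => (k:ℝ)/(n:ℝ) < y)).card : ℝ) := by
    have hfl2 : (n:ℝ)*y < (Nat.floor ((n:ℝ)*y) : ℝ) + 1 := Nat.lt_floor_add_one _
    have hcast : ((Nat.floor ((n:ℝ)*y) : ℝ)) - 1 ≤ ((Nat.floor ((n:ℝ)*y) - 1 : ℕ) : ℝ) := by
      rcases Nat.eq_zero_or_pos (Nat.floor ((n:ℝ)*y)) with h | h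
      · simp [h]
      · rw [Nat.cast_sub h]; simp
    calc (n:ℝ)*y - 2 ≤ ((Nat.floor ((n:ℝ)*y) : ℝ)) - 1 := by linarith
      _ ≤ ((Nat.floor ((n:ℝ)*y) - 1 : ℕ) : ℝ) := hcast
      _ ≤ _ := by exact_mod_cast hcard
  rw [le_inv_mul_iff₀ hnpos]
  rw [mul_sub]
  calc (n:ℝ)*y - (n:ℝ)*(2/(n:ℝ)) = (n:ℝ)*y - 2 := by field_simp
    _ ≤ _ := h2

noncomputable def BS_u (n : ℕ) (y : ℝ) : ℝ :=
  (n:ℝ)⁻¹ * ∑ k ∈ Finset.Icc 1 (n^2),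
    ((if (k:ℝ)/(n:ℝ) < y then (1:ℝ) else 0) - (if (k:ℝ)/(n:ℝ) < -y then (1:ℝ) else 0))

theorem BS_u_nonneg_side {n : ℕ} (hn : 1 ≤ n) {y : ℝ} (hy : 0 ≤ y) :
    BS_u n y = (n:ℝ)⁻¹ * ∑ k ∈ Finset.Icc 1 (n^2), (if (k:ℝ)/(n:ℝ) < y then (1:ℝ) else 0) := by
  have hnpos : (0:ℝ) < n := by exact_mod_cast hn
  unfold BS_u
  congr 1
  refine Finset.sum_congr rfl fun k hk => ?_
  simp only [Finset.mem_Icc] at hk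
  have h1 : (0:ℝ) < (k:ℝ)/(n:ℝ) := by
    have : (0:ℝ) < (k:ℝ) := by exact_mod_cast hk.1
    positivity
  rw [if_neg (by push_neg; linarith : ¬ ((k:ℝ)/(n:ℝ) < -y))]
  ring

theorem BS_u_neg (n : ℕ) (y : ℝ) : BS_u n (-y) = - BS_u n y := by
  unfold BS_u
  rw [← mul_neg, ← Finset.sum_neg_distrib]
  congr 1
  refine Finset.sum_congr rfl fun k hk => ?_
  rw [neg_neg]
  ring

theorem BS_u_mem {n : ℕ} (hn : 1 ≤ n) {y : ℝ} (hy : 0 ≤ y) :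
    0 ≤ BS_u n y ∧ BS_u n y ≤ y := by
  have hnpos : (0:ℝ) < n := by exact_mod_cast hn
  rw [BS_u_nonneg_side hn hy]
  constructor
  · refine mul_nonneg (by positivity) (Finset.sum_nonneg fun k _ => ?_)
    split <;> norm_num
  · exact BS_count hn hy

theorem BS_u_abs (n : ℕ) (y : ℝ) : |BS_u n y| ≤ |y| := by
  rcases Nat.eq_zero_or_pos n with hn | hn
  · subst hn; unfold BS_u; simp
  · rcases le_or_gt 0 y with hy | hy
    · obtain ⟨h1, h2⟩ := BS_u_mem hn hy
      rw [abs_of_nonneg h1, abs_of_nonneg hy]; exact h2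
    · have hy' : 0 ≤ -y := by linarith
      obtain ⟨h1, h2⟩ := BS_u_mem hn hy'
      rw [← neg_neg y, BS_u_neg, abs_neg, abs_neg, abs_of_nonneg h1, abs_of_nonneg hy']
      exact h2

theorem BS_u_conv {n : ℕ} (hn : 1 ≤ n) {y : ℝ} (hyn : |y| ≤ n) :
    |BS_u n y - y| ≤ 2/(n:ℝ) := by
  have hnpos : (0:ℝ) < n := by exact_mod_cast hn
  have key : ∀ z : ℝ, 0 ≤ z → z ≤ n → |BS_u n z - z| ≤ 2/(n:ℝ) := by
    intro z hz hzn
    obtain ⟨h1, h2⟩ := BS_u_mem hn hz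
    have h3 : z - 2/(n:ℝ) ≤ BS_u n z := by
      rw [BS_u_nonneg_side hn hz]; exact BS_count2 hn hz hzn
    rw [abs_le]; constructor <;> linarith
  rcases le_or_gt 0 y with hy | hy
  · exact key y hy (by rwa [abs_of_nonneg hy] at hyn)
  · have h := key (-y) (by linarith) (by rwa [abs_of_neg hy] at hyn)
    rw [BS_u_neg] at h
    calc |BS_u n y - y| = |-(BS_u n y) - -y| := by rw [← abs_neg]; ring_nf
      _ ≤ 2/(n:ℝ) := h

section Main
variable {O : Type*} [MeasurableSpace O] {μ : Measure O}
  (T : Lp ℝ 2 μ →L[ℝ] Lp ℝ 2 μ)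

theorem BS_main
    (hsub : ∀ φ : Lp ℝ 2 μ, (∀ᵐ x ∂μ, 0 ≤ φ x ∧ φ x ≤ 1) → (∀ᵐ x ∂μ, 0 ≤ T φ x ∧ T φ x ≤ 1))
    (hL1 : ∀ φ : Lp ℝ 2 μ, eLpNorm (⇑(T φ)) 1 μ ≤ eLpNorm (⇑φ) 1 μ)
    (β : ℝ → ℝ) (hβc : Continuous β) (hβm : Monotone β) (hβ0 : β 0 = 0)
    (f : Lp ℝ 2 μ) (f' h' : O → ℝ) (hf'm : StronglyMeasurable f') (hh'm : StronglyMeasurable h')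
    (hef : ⇑f =ᵐ[μ] f') (heh : ⇑(T f) =ᵐ[μ] h')
    (hβf2 : MemLp (fun x => β (f' x)) 2 μ) :
    0 ≤ ∫ x, (f' x - h' x) * β (f' x) ∂μ := by
  classical
  have hf2 : MemLp f' 2 μ := (Lp.memLp f).ae_eq hef
  have hh2 : MemLp h' 2 μ := (Lp.memLp (T f)).ae_eq heh
  set g : O → ℝ := fun x => f' x - h' x with hg_def
  have hgm : StronglyMeasurable g := hf'm.sub hh'm
  have hg2 : MemLp g 2 μ := hf2.sub hh2
  have hβfm : Measurable fun x => β (f' x) := hβc.measurable.comp hf'm.measurable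
  -- dominating function
  have hboundint : Integrable (fun x => |g x| * |β (f' x)|) μ := by
    refine (BS_mul_int hg2 hβf2).abs.congr (.of_forall fun x => ?_)
    show |g x * β (f' x)| = |g x| * |β (f' x)|
    rw [abs_mul]
  -- the approximating integrands
  set F : ℕ → O → ℝ := fun n x => g x * BS_u n (β (f' x)) with hF_def
  have hFmeas : ∀ n, Measurable (F n) := by
    intro n
    refine hgm.measurable.mul ?_
    have : (fun x => BS_u n (β (f' x))) = fun x => (n:ℝ)⁻¹ * ∑ k ∈ Finset.Icc 1 (n^2),
        ((if (k:ℝ)/(n:ℝ) < β (f' x) then (1:ℝ) else 0)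
          - (if (k:ℝ)/(n:ℝ) < -β (f' x) then (1:ℝ) else 0)) := rfl
    rw [this]
    refine Measurable.const_mul (Finset.measurable_sum _ fun k _ => ?_) _
    exact (Measurable.ite (measurableSet_lt measurable_const hβfm) measurable_const
      measurable_const).sub (Measurable.ite (measurableSet_lt measurable_const hβfm.neg)
      measurable_const measurable_const)
  -- convergence of the integrals
  have hconv : Tendsto (fun n => ∫ x, F n x ∂μ) atTop (𝓝 (∫ x, g x * β (f' x) ∂μ)) := by
    refine tendsto_integral_of_dominated_convergence (fun x => |g x| * |β (f' x)|)
      (fun n => (hFmeas n).aestronglyMeasurable) hboundint ?_ ?_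
    · intro n
      refine .of_forall fun x => ?_
      rw [hF_def]
      simp only [Real.norm_eq_abs, abs_mul]
      exact mul_le_mul_of_nonneg_left (BS_u_abs n _) (abs_nonneg _)
    · refine .of_forall fun x => ?_
      have h0 : Tendsto (fun n : ℕ => BS_u n (β (f' x)) - β (f' x)) atTop (𝓝 0) := by
        refine squeeze_zero_norm' ?_ (tendsto_const_div_atTop_nhds_zero_nat 2)
        filter_upwards [eventually_ge_atTop 1, eventually_ge_atTop ⌈|β (f' x)|⌉₊] with n h1 h2
        rw [Real.norm_eq_abs]
        refine BS_u_conv h1 ?_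
        calc |β (f' x)| ≤ (⌈|β (f' x)|⌉₊ : ℝ) := Nat.le_ceil _
          _ ≤ (n : ℝ) := by exact_mod_cast h2
      have h1 : Tendsto (fun n : ℕ => BS_u n (β (f' x))) atTop (𝓝 (β (f' x))) := by
        have := h0.add_const (β (f' x))
        simpa using this
      exact h1.const_mul (g x)
  -- nonnegativity of each approximant integral
  have hpos : ∀ n : ℕ, 1 ≤ n → 0 ≤ ∫ x, F n x ∂μ := by
    intro n hn
    have hnpos : (0:ℝ) < n := by exact_mod_cast hn
    -- integrability and positivity of the per-threshold pieces
    have hip : ∀ c : ℝ, 0 < c → Integrable (fun x => g x * (if c < β (f' x) then (1:ℝ) else 0)) μ := by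
      intro c hc
      refine Integrable.mono' (hboundint.const_mul c⁻¹)
        ((hgm.measurable.mul (Measurable.ite (measurableSet_lt measurable_const hβfm)
          measurable_const measurable_const)).stronglyMeasurable).aestronglyMeasurable
        (.of_forall fun x => ?_)
      rw [Real.norm_eq_abs, abs_mul]
      rcases lt_or_ge c (β (f' x)) with h | h
      · rw [if_pos h, abs_one, mul_one]
        have h1 : (1:ℝ) ≤ c⁻¹ * |β (f' x)| := by
          rw [← div_eq_inv_mul, le_div_iff₀ hc, one_mul]
          exact h.le.trans (le_abs_self _)
        nlinarith [abs_nonneg (g x), abs_nonneg (β (f' x))]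
      · rw [if_neg (not_lt.2 h), abs_zero, mul_zero]
        positivity
    have him : ∀ c : ℝ, 0 < c → Integrable (fun x => g x * (if c < -β (f' x) then (1:ℝ) else 0)) μ := by
      intro c hc
      refine Integrable.mono' (hboundint.const_mul c⁻¹)
        ((hgm.measurable.mul (Measurable.ite (measurableSet_lt measurable_const hβfm.neg)
          measurable_const measurable_const)).stronglyMeasurable).aestronglyMeasurable
        (.of_forall fun x => ?_)
      rw [Real.norm_eq_abs, abs_mul]
      rcases lt_or_ge c (-β (f' x)) with h | h
      · rw [if_pos h, abs_one, mul_one]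
        have h1 : (1:ℝ) ≤ c⁻¹ * |β (f' x)| := by
          rw [← div_eq_inv_mul, le_div_iff₀ hc, one_mul]
          exact h.le.trans (neg_le_abs _)
        nlinarith [abs_nonneg (g x), abs_nonneg (β (f' x))]
      · rw [if_neg (not_lt.2 h), abs_zero, mul_zero]
        positivity
    have hposp : ∀ c : ℝ, 0 < c → 0 ≤ ∫ x, g x * (if c < β (f' x) then (1:ℝ) else 0) ∂μ := by
      intro c hc
      rcases BS_thr β hβc hβm hβ0 hc with h | ⟨t, ht, hiff⟩
      · have : ∀ x, g x * (if c < β (f' x) then (1:ℝ) else 0) = 0 := by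
          intro x; rw [if_neg (h (f' x)), mul_zero]
        rw [integral_congr_ae (.of_forall this)]
        simp
      · have hK := BS_K T hsub hL1 f f' h' hf'm hh'm hef heh ht
        have : (∫ x, g x * (if c < β (f' x) then (1:ℝ) else 0) ∂μ)
            = ∫ x, (if t < f' x then (1:ℝ) else 0) * (f' x - h' x) ∂μ := by
          refine integral_congr_ae (.of_forall fun x => ?_)
          show g x * (if c < β (f' x) then (1:ℝ) else 0)
              = (if t < f' x then (1:ℝ) else 0) * (f' x - h' x)
          rcases lt_or_ge t (f' x) with h | h
          · rw [if_pos h, if_pos ((hiff (f' x)).2 h), one_mul, mul_one]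
          · rw [if_neg (not_lt.2 h), if_neg (fun hcon => absurd ((hiff (f' x)).1 hcon) (not_lt.2 h)),
              zero_mul, mul_zero]
        rw [this]
        exact hK
    have hposm : ∀ c : ℝ, 0 < c → (∫ x, g x * (if c < -β (f' x) then (1:ℝ) else 0) ∂μ) ≤ 0 := by
      intro c hc
      have hβ'c : Continuous fun r : ℝ => -β (-r) := (hβc.comp continuous_neg).neg
      have hβ'm : Monotone fun r : ℝ => -β (-r) := fun a b hab => by
        simp only [neg_le_neg_iff]
        exact hβm (neg_le_neg hab)
      have hβ'0 : -β (-(0:ℝ)) = 0 := by simp [hβ0]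
      rcases BS_thr _ hβ'c hβ'm hβ'0 hc with h | ⟨t, ht, hiff⟩
      · have : ∀ x, g x * (if c < -β (f' x) then (1:ℝ) else 0) = 0 := by
          intro x
          have := h (-f' x)
          rw [neg_neg] at this
          rw [if_neg this, mul_zero]
        rw [integral_congr_ae (.of_forall this)]
        simp
      · have hK := BS_K2 T hsub hL1 f f' h' hf'm hh'm hef heh (s := -t) (by linarith)
        have heqi : (∫ x, g x * (if c < -β (f' x) then (1:ℝ) else 0) ∂μ)
            = ∫ x, (if f' x < -t then (1:ℝ) else 0) * (f' x - h' x) ∂μ := by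
          refine integral_congr_ae (.of_forall fun x => ?_)
          show g x * (if c < -β (f' x) then (1:ℝ) else 0)
              = (if f' x < -t then (1:ℝ) else 0) * (f' x - h' x)
          have hiffx : c < -β (f' x) ↔ t < -f' x := by
            have := hiff (-f' x)
            rwa [neg_neg] at this
          have hiffx2 : c < -β (f' x) ↔ f' x < -t := by
            rw [hiffx]; constructor <;> intro h <;> linarith
          rcases lt_or_ge (f' x) (-t) with h | h
          · rw [if_pos h, if_pos (hiffx2.2 h), one_mul, mul_one]
          · rw [if_neg (not_lt.2 h), if_neg (fun hcon => absurd (hiffx2.1 hcon) (not_lt.2 h)),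
              zero_mul, mul_zero]
        rw [heqi]
        exact hK
    -- expand F n as a sum
    have hexp : (∫ x, F n x ∂μ) = (n:ℝ)⁻¹ * ∑ k ∈ Finset.Icc 1 (n^2),
        ((∫ x, g x * (if (k:ℝ)/(n:ℝ) < β (f' x) then (1:ℝ) else 0) ∂μ)
          - ∫ x, g x * (if (k:ℝ)/(n:ℝ) < -β (f' x) then (1:ℝ) else 0) ∂μ) := by
      have hstep : ∀ x, F n x = (n:ℝ)⁻¹ * ∑ k ∈ Finset.Icc 1 (n^2),
          (g x * (if (k:ℝ)/(n:ℝ) < β (f' x) then (1:ℝ) else 0)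
            - g x * (if (k:ℝ)/(n:ℝ) < -β (f' x) then (1:ℝ) else 0)) := by
        have hfact : ∀ (a c : ℝ) (s : Finset ℕ) (F G : ℕ → ℝ),
            a * (c * ∑ k ∈ s, (F k - G k)) = c * ∑ k ∈ s, (a * F k - a * G k) := by
          intro a c s F G
          rw [mul_left_comm]
          congr 1
          rw [Finset.mul_sum]
          exact Finset.sum_congr rfl fun k _ => by ring
        intro x
        exact hfact (g x) _ _ _ _
      have hck : ∀ k ∈ Finset.Icc 1 (n^2), (0:ℝ) < (k:ℝ)/(n:ℝ) := by
        intro k hk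
        simp only [Finset.mem_Icc] at hk
        have : (0:ℝ) < (k:ℝ) := by exact_mod_cast hk.1
        positivity
      rw [integral_congr_ae (.of_forall hstep), integral_const_mul]
      congr 1
      rw [integral_finset_sum (Finset.Icc 1 (n^2))
        (f := fun (k : ℕ) (x : O) => (g x * if (k:ℝ)/(n:ℝ) < β (f' x) then (1:ℝ) else 0)
          - g x * if (k:ℝ)/(n:ℝ) < -β (f' x) then (1:ℝ) else 0)
        (fun k hk => ((hip _ (hck k hk)).sub (him _ (hck k hk))))]
      refine Finset.sum_congr rfl fun k hk => ?_
      exact integral_sub (hip _ (hck k hk)) (him _ (hck k hk))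
    rw [hexp]
    refine mul_nonneg (by positivity) (Finset.sum_nonneg fun k hk => ?_)
    have hck : (0:ℝ) < (k:ℝ)/(n:ℝ) := by
      simp only [Finset.mem_Icc] at hk
      have : (0:ℝ) < (k:ℝ) := by exact_mod_cast hk.1
      positivity
    have := hposp _ hck
    have := hposm _ hck
    linarith
  -- conclude
  refine ge_of_tendsto hconv ?_
  filter_upwards [eventually_ge_atTop 1] with n hn
  exact hpos n hn

end Main


set_option maxHeartbeats 1000000 in
/-- Brézis–Strauss type inequality.  Let `H = L²(O, μ)` and let `A`
be a linear maximal monotone operator on `H` (with domain `D`) whose resolvent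
`J λ = (I + λ A)⁻¹` is sub-Markovian and a contraction in the `L¹(O,μ)`-norm.  Let
`β : ℝ → ℝ` be continuous, nondecreasing, bounded, with `β 0 = 0`.  Then for every
`v ∈ D(A)`, `⟨A v, β ∘ v⟩_{L²} ≥ 0`. -/
theorem inner_Av_beta_nonneg
    {O : Type*} [MeasurableSpace O] (μ : Measure O)
    (D : Submodule ℝ (Lp ℝ 2 μ)) (A : Lp ℝ 2 μ →ₗ[ℝ] Lp ℝ 2 μ)
    -- A is monotone on D
    (hmono : ∀ v ∈ D, 0 ≤ ⟪A v, v⟫)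
    -- maximality: I + A maps D onto H
    (hmax : ∀ h : Lp ℝ 2 μ, ∃ w ∈ D, w + A w = h)
    -- the resolvent family J λ = (I + λ A)⁻¹
    (J : ℝ → (Lp ℝ 2 μ →L[ℝ] Lp ℝ 2 μ))
    (hJD : ∀ lam : ℝ, 0 < lam → ∀ h, J lam h ∈ D)
    (hJres : ∀ lam : ℝ, 0 < lam → ∀ h, J lam h + lam • A (J lam h) = h)
    -- sub-Markovianity of the resolvent
    (hJsubMarkov : ∀ lam : ℝ, 0 < lam → ∀ φ : Lp ℝ 2 μ,
      (∀ᵐ x ∂μ, 0 ≤ φ x ∧ φ x ≤ 1) → (∀ᵐ x ∂μ, 0 ≤ J lam φ x ∧ J lam φ x ≤ 1))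
    -- the resolvent is an L¹-contraction
    (hJL1contr : ∀ lam : ℝ, 0 < lam → ∀ φ : Lp ℝ 2 μ,
      eLpNorm (⇑(J lam φ)) 1 μ ≤ eLpNorm (⇑φ) 1 μ)
    -- β : ℝ → ℝ continuous, nondecreasing, bounded, β 0 = 0
    (β : ℝ → ℝ) (hβc : Continuous β) (hβm : Monotone β)
    (hβb : ∃ C : ℝ, ∀ r : ℝ, |β r| ≤ C) (hβ0 : β 0 = 0)
    -- v ∈ D(A), and βv ∈ L² represents β ∘ v
    (v : Lp ℝ 2 μ) (hv : v ∈ D)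
    (βv : Lp ℝ 2 μ) (hβv : ⇑βv =ᵐ[μ] fun x => β (v x)) :
    0 ≤ ⟪A v, βv⟫ := by
  classical
  -- resolvent identity on the domain
  have hres : ∀ lam : ℝ, 0 < lam → ∀ u, u ∈ D → J lam (A u) = lam⁻¹ • (u - J lam u) := by
    intro lam hlam u huD
    have huniq : J lam (u + lam • A u) = u := by
      set h := u + lam • A u with hh_def
      set w := J lam h with hw_def
      have hwD : w ∈ D := hJD lam hlam h
      have hwres : w + lam • A w = u + lam • A u := hJres lam hlam h
      have hsubD : w - u ∈ D := sub_mem hwD huD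
      have hures : (w - u) + lam • A (w - u) = 0 := by
        have h2 : (w + lam • A w) - (u + lam • A u) = 0 := sub_eq_zero_of_eq hwres
        calc (w - u) + lam • A (w - u)
            = (w + lam • A w) - (u + lam • A u) := by rw [map_sub, smul_sub]; abel
          _ = 0 := h2
      have h0 : ⟪(w - u) + lam • A (w - u), w - u⟫ = 0 := by
        rw [hures, inner_zero_left]
      rw [inner_add_left, real_inner_smul_left, real_inner_self_eq_norm_sq] at h0
      have hm := hmono (w - u) hsubD
      have hnorm0 : ‖w - u‖ = 0 := by
        have h1 : ‖w - u‖^2 ≤ 0 := by nlinarith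
        have hsq : ‖w - u‖^2 = 0 := le_antisymm h1 (sq_nonneg _)
        exact sq_eq_zero_iff.1 hsq
      have : w - u = 0 := norm_eq_zero.1 hnorm0
      have : w = u := by rwa [sub_eq_zero] at this
      exact this
    have hlin : J lam u + lam • J lam (A u) = u := by
      have h1 := huniq
      rw [map_add] at h1
      rw [ContinuousLinearMap.map_smul] at h1
      exact h1
    have h2 : lam • J lam (A u) = u - J lam u := by
      rw [eq_sub_iff_add_eq, add_comm]
      exact hlin
    rw [← h2, smul_smul, inv_mul_cancel₀ hlam.ne', one_smul]
  -- L² contraction property of the resolvent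
  have hcontr : ∀ lam : ℝ, 0 < lam → ∀ h, ‖J lam h‖ ≤ ‖h‖ := by
    intro lam hlam h
    set w := J lam h with hw_def
    have hwres : w + lam • A w = h := hJres lam hlam h
    have h1 : ⟪h, w⟫ = ‖w‖^2 + lam * ⟪A w, w⟫ := by
      rw [← hwres, inner_add_left, real_inner_smul_left, real_inner_self_eq_norm_sq]
    have h2 : ‖w‖^2 ≤ ⟪h, w⟫ := by nlinarith [hmono w (hJD lam hlam h)]
    have h3 : ⟪h, w⟫ ≤ ‖h‖ * ‖w‖ := real_inner_le_norm h w
    rcases (norm_nonneg w).eq_or_lt with h4 | h4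
    · rw [← h4]; exact norm_nonneg h
    · nlinarith
  -- per-lambda nonnegativity
  have hmain : ∀ lam : ℝ, 0 < lam → 0 ≤ ⟪J lam (A v), βv⟫ := by
    intro lam hlam
    obtain ⟨v', hv'm, hv'e⟩ : ∃ v', StronglyMeasurable v' ∧ ⇑v =ᵐ[μ] v' :=
      ⟨(Lp.aestronglyMeasurable v).mk _, (Lp.aestronglyMeasurable v).stronglyMeasurable_mk,
        (Lp.aestronglyMeasurable v).ae_eq_mk⟩
    obtain ⟨w', hw'm, hw'e⟩ : ∃ w', StronglyMeasurable w' ∧ ⇑(J lam v) =ᵐ[μ] w' :=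
      ⟨(Lp.aestronglyMeasurable (J lam v)).mk _,
        (Lp.aestronglyMeasurable (J lam v)).stronglyMeasurable_mk,
        (Lp.aestronglyMeasurable (J lam v)).ae_eq_mk⟩
    have hβveq : ⇑βv =ᵐ[μ] fun x => β (v' x) := by
      filter_upwards [hβv, hv'e] with x h1 h2
      rw [h1, h2]
    have hβf2 : MemLp (fun x => β (v' x)) 2 μ := (Lp.memLp βv).ae_eq hβveq
    have hint := BS_main (J lam) (hJsubMarkov lam hlam) (hJL1contr lam hlam)
      β hβc hβm hβ0 v v' w' hv'm hw'm hv'e hw'e hβf2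
    rw [hres lam hlam v hv, real_inner_smul_left]
    refine mul_nonneg (inv_nonneg.2 hlam.le) ?_
    rw [L2.inner_def]
    have heq : (∫ a, ⟪(v - J lam v) a, βv a⟫ ∂μ) = ∫ x, (v' x - w' x) * β (v' x) ∂μ := by
      refine integral_congr_ae ?_
      filter_upwards [Lp.coeFn_sub v (J lam v), hv'e, hw'e, hβveq] with x h1 h2 h3 h4
      rw [h1, Pi.sub_apply, h2, h3, h4]
      simp [RCLike.inner_apply, conj_trivial]
      ring
    rw [heq]
    exact hint
  -- density of D
  have hdense : ∀ w : Lp ℝ 2 μ, ∀ ε : ℝ, 0 < ε → ∃ u ∈ D, ‖w - u‖ < ε := by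
    have horth : Dᗮ = ⊥ := by
      rw [Submodule.eq_bot_iff]
      intro z hz
      obtain ⟨w, hwD, hwz⟩ := hmax z
      have h1 : ⟪w, z⟫ = 0 := (Submodule.mem_orthogonal D z).1 hz w hwD
      rw [← hwz, inner_add_right, real_inner_self_eq_norm_sq] at h1
      have h2 : ⟪w, A w⟫ = ⟪A w, w⟫ := real_inner_comm (A w) w
      have h3 := hmono w hwD
      have hnorm0 : ‖w‖ = 0 := by
        have h4 : ‖w‖^2 ≤ 0 := by nlinarith
        have hsq : ‖w‖^2 = 0 := le_antisymm h4 (sq_nonneg _)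
        exact sq_eq_zero_iff.1 hsq
      have hw0 : w = 0 := norm_eq_zero.1 hnorm0
      rw [← hwz, hw0, map_zero, add_zero]
    have hcl : D.topologicalClosure = ⊤ := by
      rw [← Submodule.orthogonal_orthogonal_eq_closure, horth, Submodule.bot_orthogonal_eq_top]
    intro w ε hε
    have hwcl : w ∈ closure (D : Set (Lp ℝ 2 μ)) := by
      rw [← Submodule.topologicalClosure_coe, hcl]
      trivial
    obtain ⟨u, huD, hud⟩ := Metric.mem_closure_iff.1 hwcl ε hε
    exact ⟨u, huD, by rwa [← dist_eq_norm]⟩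
  -- conclusion via approximation
  by_contra hneg
  push_neg at hneg
  set ε : ℝ := -⟪A v, βv⟫ with hε_def
  have hεpos : 0 < ε := by simp only [hε_def]; linarith
  set δ : ℝ := ε / (3 * (‖βv‖ + 1)) with hδ_def
  have hδpos : 0 < δ := by
    have : (0:ℝ) < 3 * (‖βv‖ + 1) := by positivity
    positivity
  obtain ⟨u, huD, hu⟩ := hdense (A v) δ hδpos
  set lam : ℝ := min 1 (δ / (‖A u‖ + 1)) with hlam_def
  have hlampos : 0 < lam := by
    have h1 : (0:ℝ) < δ / (‖A u‖ + 1) := by positivity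
    exact lt_min one_pos h1
  -- bound ‖A v - J lam (A v)‖
  have hb1 : ‖u - J lam u‖ ≤ lam * ‖A u‖ := by
    have h1 := hres lam hlampos u huD
    have h2 : lam • J lam (A u) = u - J lam u := by
      rw [h1, smul_smul, mul_inv_cancel₀ hlampos.ne', one_smul]
    rw [← h2, norm_smul, Real.norm_eq_abs, abs_of_pos hlampos]
    exact mul_le_mul_of_nonneg_left (hcontr lam hlampos (A u)) hlampos.le
  have hb2 : lam * ‖A u‖ ≤ δ := by
    have h1 : lam ≤ δ / (‖A u‖ + 1) := min_le_right _ _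
    have h2 : (0:ℝ) < ‖A u‖ + 1 := by positivity
    calc lam * ‖A u‖ ≤ (δ / (‖A u‖ + 1)) * ‖A u‖ :=
          mul_le_mul_of_nonneg_right h1 (norm_nonneg _)
      _ ≤ δ := by
          rw [div_mul_eq_mul_div, div_le_iff₀ h2]
          nlinarith [norm_nonneg (A u), hδpos]
  have hb3 : ‖A v - J lam (A v)‖ ≤ 3 * δ := by
    have e1 : A v - J lam (A v) = (A v - u) + (u - J lam u) + (J lam u - J lam (A v)) := by abel
    have e2 : ‖J lam u - J lam (A v)‖ ≤ ‖A v - u‖ := by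
      have : J lam u - J lam (A v) = J lam (u - A v) := ((J lam).map_sub u (A v)).symm
      rw [this]
      calc ‖J lam (u - A v)‖ ≤ ‖u - A v‖ := hcontr lam hlampos _
        _ = ‖A v - u‖ := norm_sub_rev _ _
    calc ‖A v - J lam (A v)‖
        ≤ ‖(A v - u) + (u - J lam u)‖ + ‖J lam u - J lam (A v)‖ := by rw [e1]; exact norm_add_le _ _
      _ ≤ ‖A v - u‖ + ‖u - J lam u‖ + ‖J lam u - J lam (A v)‖ := by
          have := norm_add_le (A v - u) (u - J lam u)
          linarith
      _ ≤ δ + lam * ‖A u‖ + δ := by linarith [hb1, e2, hu]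
      _ ≤ 3 * δ := by linarith [hb2]
  -- split the inner product
  have hsplit : ⟪A v, βv⟫ = ⟪A v - J lam (A v), βv⟫ + ⟪J lam (A v), βv⟫ := by
    rw [← inner_add_left]
    congr 1
    abel
  have habs : |⟪A v - J lam (A v), βv⟫| ≤ ‖A v - J lam (A v)‖ * ‖βv‖ :=
    abs_real_inner_le_norm _ _
  have hbnd : ⟪A v - J lam (A v), βv⟫ ≥ -(3 * δ * ‖βv‖) := by
    have h1 := (abs_le.1 habs).1
    have h2 : ‖A v - J lam (A v)‖ * ‖βv‖ ≤ 3 * δ * ‖βv‖ :=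
      mul_le_mul_of_nonneg_right hb3 (norm_nonneg _)
    linarith
  have hfinal : ⟪A v, βv⟫ ≥ -(3 * δ * ‖βv‖) := by
    have := hmain lam hlampos
    rw [hsplit]
    linarith
  have hstrict : 3 * δ * ‖βv‖ < ε := by
    have h2 : (0:ℝ) < 3 * (‖βv‖ + 1) := by positivity
    have h3 : δ * (3 * ‖βv‖) < ε := by
      rw [hδ_def, div_mul_eq_mul_div, div_lt_iff₀ h2]
      nlinarith [norm_nonneg βv, hεpos]
    calc 3 * δ * ‖βv‖ = δ * (3 * ‖βv‖) := by ring
      _ < ε := h3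
  have : ⟪A v, βv⟫ = -ε := by rw [hε_def]; ring
  linarith
end

section
/- Let A be a linear maximal monotone operator on L²(O, μ) with sub-Markovian resolvent J_λ that contracts the L¹-norm, let j : ℝ → [0,∞) be a convex differentiable function with j(0) = 0, and let v ∈ D(A) with j(v) ∈ L¹(O,μ) and j'(v) ∈ L²(O,μ). Then for every λ > 0, the Yosida approximation A_λ = (1/λ)(I − J_λ) satisfies ⟨A_λ v, j'(v)⟩_{L²} ≥ (1/λ)(‖j(v)‖_{L¹} − ‖j(J_λ v)‖_{L¹}). -/
open MeasureTheory Filter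
open scoped ENNReal RealInnerProductSpace

lemma convex_tangent_aux {j j' : ℝ → ℝ} (hjconv : ConvexOn ℝ Set.univ j)
    (hj' : ∀ r : ℝ, HasDerivAt j (j' r) r) (a b : ℝ) :
    j a - j b ≤ j' a * (a - b) := by
  rcases lt_trichotomy a b with h | h | h
  · have := hjconv.le_slope_of_hasDerivAt (Set.mem_univ a) (Set.mem_univ b) h (hj' a)
    rw [slope_def_field] at this
    have h2 := (le_div_iff₀ (sub_pos.mpr h)).mp this
    nlinarith
  · simp [h]
  · have := hjconv.slope_le_of_hasDerivAt (Set.mem_univ b) (Set.mem_univ a) h (hj' a)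
    rw [slope_def_field] at this
    exact (div_le_iff₀ (sub_pos.mpr h)).mp this

/-- Let `A` be a linear maximal monotone operator on `L²(O,μ)` with
sub-Markovian resolvent `J λ` that contracts the `L¹`-norm, let `j : ℝ → [0,∞)` be a
convex differentiable function with `j 0 = 0`, and let `v ∈ D(A)` with `j ∘ v ∈ L¹`
and `j' ∘ v ∈ L²`.  Then for every `λ > 0`, the Yosida approximation
`A_λ = (1/λ)(I - J λ)` satisfies
`⟨A_λ v, j'(v)⟩_{L²} ≥ (1/λ)(‖j(v)‖_{L¹} - ‖j(J_λ v)‖_{L¹})`. -/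
theorem yosida_inner_ge_L1_difference
    {O : Type*} [MeasurableSpace O] (μ : Measure O)
    (D : Submodule ℝ (Lp ℝ 2 μ)) (A : Lp ℝ 2 μ →ₗ[ℝ] Lp ℝ 2 μ)
    (hmono : ∀ w ∈ D, 0 ≤ ⟪A w, w⟫)
    (hmax : ∀ h : Lp ℝ 2 μ, ∃ w ∈ D, w + A w = h)
    (J : ℝ → (Lp ℝ 2 μ →L[ℝ] Lp ℝ 2 μ))
    (hJD : ∀ lam : ℝ, 0 < lam → ∀ h, J lam h ∈ D)
    (hJres : ∀ lam : ℝ, 0 < lam → ∀ h, J lam h + lam • A (J lam h) = h)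
    (hJsubMarkov : ∀ lam : ℝ, 0 < lam → ∀ φ : Lp ℝ 2 μ,
      (∀ᵐ x ∂μ, 0 ≤ φ x ∧ φ x ≤ 1) → (∀ᵐ x ∂μ, 0 ≤ J lam φ x ∧ J lam φ x ≤ 1))
    (hJL1contr : ∀ lam : ℝ, 0 < lam → ∀ φ : Lp ℝ 2 μ,
      eLpNorm (⇑(J lam φ)) 1 μ ≤ eLpNorm (⇑φ) 1 μ)
    -- j : ℝ → ℝ₊ convex, differentiable with derivative j', j 0 = 0
    (j j' : ℝ → ℝ) (hjconv : ConvexOn ℝ Set.univ j)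
    (hj' : ∀ r : ℝ, HasDerivAt j (j' r) r)
    (hjpos : ∀ r : ℝ, 0 ≤ j r) (hj0 : j 0 = 0)
    -- v ∈ D(A), j(v) ∈ L¹, j'(v) ∈ L² (represented by w)
    (v : Lp ℝ 2 μ) (hv : v ∈ D)
    (hjv : Integrable (fun x => j (v x)) μ)
    (w : Lp ℝ 2 μ) (hw : ⇑w =ᵐ[μ] fun x => j' (v x))
    (lam : ℝ) (hlam : 0 < lam)
    -- j(J_λ v) ∈ L¹ so that the right-hand side makes sense
    (hjJv : Integrable (fun x => j (J lam v x)) μ) :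
    (1 / lam) * ((∫ x, j (v x) ∂μ) - ∫ x, j (J lam v x) ∂μ)
      ≤ ⟪(1 / lam) • (v - J lam v), w⟫ := by
  rw [real_inner_smul_left]
  apply mul_le_mul_of_nonneg_left _ (by positivity : (0:ℝ) ≤ 1 / lam)
  rw [← integral_sub hjv hjJv, L2.inner_def]
  refine integral_mono_ae (hjv.sub hjJv) (L2.integrable_inner _ _) ?_
  filter_upwards [hw, Lp.coeFn_sub v (J lam v)] with x hwx hsx
  rw [hsx]
  simp only [RCLike.inner_apply, starRingEnd_apply, star_trivial, Pi.sub_apply, hwx]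
  have := convex_tangent_aux hjconv hj' (v x) (J lam v x)
  nlinarith
end

section
/- Let T : L²(O,μ) → L²(O,μ) be a linear sub-Markovian operator (0 ≤ φ ≤ 1 a.e. implies 0 ≤ Tφ ≤ 1 a.e.) that is also a contraction in the L¹(O,μ)-norm, and let j : ℝ → [0,∞) be a convex function with j(0)=0. Then for every v ∈ L²(O,μ) with j(v) ∈ L¹(O,μ), one has ‖j(Tv)‖_{L¹} ≤ ‖j(v)‖_{L¹}. -/
open MeasureTheory Filter
open scoped ENNReal

lemma exists_subgradient {j : ℝ → ℝ} (hj : ConvexOn ℝ Set.univ j) (q : ℝ) :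
    ∃ a : ℝ, ∀ r : ℝ, j q + a * (r - q) ≤ j r := by
  set S : Set ℝ := (fun r => (j r - j q) / (r - q)) '' Set.Ioi q with hS
  have hne : S.Nonempty := ⟨_, ⟨q + 1, by simp, rfl⟩⟩
  have hlb : ∀ p : ℝ, p < q → ∀ s ∈ S, (j p - j q) / (p - q) ≤ s := by
    rintro p hp s ⟨r, hr, rfl⟩
    exact hj.secant_mono (Set.mem_univ q) (Set.mem_univ p) (Set.mem_univ r)
      (by linarith) (by simp at hr; linarith) (by simp at hr; linarith)
  have hbdd : BddBelow S := ⟨(j (q-1) - j q) / ((q-1) - q), fun s hs => hlb (q-1) (by linarith) s hs⟩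
  refine ⟨sInf S, fun r => ?_⟩
  rcases lt_trichotomy r q with hrq | rfl | hrq
  · have h1 : (j r - j q) / (r - q) ≤ sInf S := le_csInf hne (hlb r hrq)
    have h2 : sInf S * (r - q) ≤ (j r - j q) / (r - q) * (r - q) := by
      have := mul_le_mul_of_nonpos_right h1 (by linarith : r - q ≤ 0)
      linarith
    have h3 : (j r - j q) / (r - q) * (r - q) = j r - j q :=
      div_mul_cancel₀ _ (by intro h; rw [sub_eq_zero] at h; exact absurd h (ne_of_lt hrq))
    linarith
  · simp
  · have h1 : sInf S ≤ (j r - j q) / (r - q) := csInf_le hbdd ⟨r, by simpa using hrq, rfl⟩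
    have h2 : sInf S * (r - q) ≤ (j r - j q) / (r - q) * (r - q) :=
      mul_le_mul_of_nonneg_right h1 (by linarith)
    have h3 : (j r - j q) / (r - q) * (r - q) = j r - j q :=
      div_mul_cancel₀ _ (by intro h; rw [sub_eq_zero] at h; exact absurd h (ne_of_gt hrq))
    linarith

lemma dense_support {j : ℝ → ℝ} (hj : ConvexOn ℝ Set.univ j)
    (a : ℚ → ℝ) (ha : ∀ (q : ℚ) (r : ℝ), j q + a q * (r - q) ≤ j r)
    (r : ℝ) {ε : ℝ} (hε : 0 < ε) :
    ∃ q : ℚ, j r - ε ≤ j q + a q * (r - q) := by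
  obtain ⟨M₁, hM₁⟩ : ∃ t : ℝ, t = j (r - 1) - j (r - 2) := ⟨_, rfl⟩
  obtain ⟨M₂, hM₂⟩ : ∃ t : ℝ, t = j (r + 1) - j r := ⟨_, rfl⟩
  obtain ⟨D, hD⟩ : ∃ t : ℝ, t = max (M₂ - M₁) 0 + 1 := ⟨_, rfl⟩
  have hD1 : max (M₂ - M₁) 0 + 1 = D := hD.symm
  have hDpos : (0:ℝ) < D := by rw [hD]; positivity
  have hDM : M₂ - M₁ ≤ D - 1 := by
    have := le_max_left (M₂ - M₁) 0; linarith
  have hD1' : (0:ℝ) ≤ D - 1 := by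
    have := le_max_right (M₂ - M₁) 0; linarith
  have hδpos : 0 < min 1 (ε / D) := lt_min one_pos (div_pos hε hDpos)
  obtain ⟨q, hq1, hq2⟩ := exists_rat_btwn (show r - min 1 (ε / D) < r by linarith)
  refine ⟨q, ?_⟩
  have hqr : (q:ℝ) < r := hq2
  have hq3 : r - (q:ℝ) < min 1 (ε / D) := by linarith
  have hq4 : r - 1 < (q:ℝ) := by
    have := min_le_left 1 (ε / D); linarith
  have hrq' : 0 < r - (q:ℝ) := by linarith
  -- a q ≥ slope (r-2) q ≥ M₁
  have h1 : (j (q:ℝ) - j (r - 2)) / ((q:ℝ) - (r - 2)) ≤ a q := by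
    have h := ha q (r - 2)
    have hpos : (0:ℝ) < (q:ℝ) - (r - 2) := by linarith
    rw [div_le_iff₀ hpos]
    nlinarith
  have h2 : M₁ ≤ (j (q:ℝ) - j (r - 2)) / ((q:ℝ) - (r - 2)) := by
    have h := hj.secant_mono (a := r - 2) (x := r - 1) (y := (q:ℝ))
      (Set.mem_univ _) (Set.mem_univ _) (Set.mem_univ _)
      (by intro h; linarith [congrArg id h]) (by intro h; rw [h] at hq4; linarith) (by linarith)
    have he : (r - 1 - (r - 2)) = (1:ℝ) := by ring
    rw [he, div_one] at h
    rw [hM₁]; exact h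
  -- slope q r ≤ M₂
  have h3 : (j (q:ℝ) - j r) / ((q:ℝ) - r) ≤ M₂ := by
    have h := hj.secant_mono (a := r) (x := (q:ℝ)) (y := r + 1)
      (Set.mem_univ _) (Set.mem_univ _) (Set.mem_univ _)
      (by intro h; exact absurd h (ne_of_lt hqr)) (by intro h; linarith [congrArg id h]) (by linarith)
    have he : (r + 1 - r) = (1:ℝ) := by ring
    rw [he, div_one] at h
    rw [hM₂]; exact h
  have hslope : (j (q:ℝ) - j r) / ((q:ℝ) - r) = (j r - j (q:ℝ)) / (r - (q:ℝ)) := by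
    rw [← neg_div_neg_eq]; congr 1 <;> ring
  have hgap : j r - (j (q:ℝ) + a q * (r - (q:ℝ)))
      = ((j r - j (q:ℝ)) / (r - (q:ℝ)) - a q) * (r - (q:ℝ)) := by
    field_simp
    ring
  have hM1aq : M₁ ≤ a q := le_trans h2 h1
  have hsM : (j r - j (q:ℝ)) / (r - (q:ℝ)) ≤ M₂ := by rw [← hslope]; exact h3
  have key : ((j r - j (q:ℝ)) / (r - (q:ℝ)) - a q) * (r - (q:ℝ)) ≤ (M₂ - M₁) * (r - (q:ℝ)) := by
    apply mul_le_mul_of_nonneg_right _ (le_of_lt hrq')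
    linarith
  have hrqD : r - (q:ℝ) ≤ ε / D := le_trans (le_of_lt hq3) (min_le_right _ _)
  have h5 : (M₂ - M₁) * (r - (q:ℝ)) ≤ (D - 1) * (ε / D) :=
    mul_le_mul hDM hrqD (le_of_lt hrq') hD1'
  have h6 : (D - 1) * (ε / D) ≤ ε := by
    rw [mul_div_assoc', div_le_iff₀ hDpos]
    nlinarith
  have hfinal : j r - (j (q:ℝ) + a q * (r - (q:ℝ))) ≤ ε := by
    rw [hgap]; exact le_trans key (le_trans h5 h6)
  linarith

noncomputable def jmF (L : ℕ → ℝ → ℝ) : ℕ → ℝ → ℝ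
  | 0 => fun _ => 0
  | (m+1) => fun r => max (jmF L m r) (L m r)

lemma jmF_mono (L : ℕ → ℝ → ℝ) (r : ℝ) : Monotone (fun m => jmF L m r) := by
  apply monotone_nat_of_le_succ
  intro m
  exact le_max_left _ _

lemma jmF_nonneg (L : ℕ → ℝ → ℝ) (m : ℕ) (r : ℝ) : 0 ≤ jmF L m r :=
  jmF_mono L r (Nat.zero_le m)

lemma jmF_le {L : ℕ → ℝ → ℝ} {j : ℝ → ℝ} (hj : ∀ r, 0 ≤ j r)
    (hL : ∀ n r, L n r ≤ j r) (m : ℕ) (r : ℝ) : jmF L m r ≤ j r := by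
  induction m with
  | zero => exact hj r
  | succ m ih => exact max_le ih (hL m r)

lemma le_jmF (L : ℕ → ℝ → ℝ) {n m : ℕ} (h : n < m) (r : ℝ) : L n r ≤ jmF L m r := by
  induction m with
  | zero => omega
  | succ m ih =>
    rcases Nat.lt_succ_iff_lt_or_eq.mp h with h' | rfl
    · exact le_trans (ih h') (le_max_left _ _)
    · exact le_max_right _ _

lemma jmF_le_of_pieces {L : ℕ → ℝ → ℝ} {m : ℕ} {s c : ℝ} (h0 : 0 ≤ c)
    (hp : ∀ n, n < m → L n s ≤ c) : jmF L m s ≤ c := by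
  induction m with
  | zero => exact h0
  | succ m ih =>
    exact max_le (ih fun n hn => hp n (Nat.lt_succ_of_lt hn)) (hp m (Nat.lt_succ_self m))

lemma jmF_continuous {L : ℕ → ℝ → ℝ} (hL : ∀ n, Continuous (L n)) (m : ℕ) :
    Continuous (jmF L m) := by
  induction m with
  | zero => exact continuous_const
  | succ m ih => exact ih.max (hL m)

lemma jmF_linear_bound {L : ℕ → ℝ → ℝ} (c : ℕ → ℝ)
    (hL : ∀ n r, L n r ≤ c n * |r|) (m : ℕ) :
    ∃ C : ℝ, 0 ≤ C ∧ ∀ r, jmF L m r ≤ C * |r| := by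
  induction m with
  | zero => exact ⟨0, le_refl _, fun r => by simp [jmF]⟩
  | succ m ih =>
    obtain ⟨C, hC0, hC⟩ := ih
    refine ⟨max C (max (c m) 0), le_trans hC0 (le_max_left _ _), fun r => ?_⟩
    apply max_le
    · exact le_trans (hC r) (mul_le_mul_of_nonneg_right (le_max_left _ _) (abs_nonneg r))
    · exact le_trans (hL m r) (mul_le_mul_of_nonneg_right
        (le_trans (le_max_left _ _) (le_max_right _ _)) (abs_nonneg r))

section Meas

variable {O : Type*} [MeasurableSpace O] {μ : Measure O}

lemma tendsto_eLpNorm_two_sub {f : ℕ → O → ℝ} {g : O → ℝ}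
    (hg : MemLp g 2 μ) (hfm : ∀ k, AEStronglyMeasurable (f k) μ)
    (hdom : ∀ k, ∀ᵐ x ∂μ, |f k x| ≤ |g x|)
    (hae : ∀ᵐ x ∂μ, Filter.Tendsto (fun k => f k x) atTop (nhds (g x))) :
    Filter.Tendsto (fun k => eLpNorm (f k - g) 2 μ) atTop (nhds 0) := by
  have h2 : ((2:ℝ≥0∞)).toReal = 2 := by norm_num
  have hnn : ∀ {u w : ℝ}, |u| ≤ |w| → (‖u‖₊ : ℝ≥0∞) ≤ (‖w‖₊ : ℝ≥0∞) := by
    intro u w h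
    rw [← enorm_eq_nnnorm, ← enorm_eq_nnnorm, Real.enorm_eq_ofReal_abs, Real.enorm_eq_ofReal_abs]
    exact ENNReal.ofReal_le_ofReal h
  have hgfin : ∫⁻ x, (‖g x‖₊ : ℝ≥0∞) ^ (2:ℝ) ∂μ ≠ ∞ := by
    have h := hg.eLpNorm_lt_top
    rw [eLpNorm_eq_lintegral_rpow_enorm_toReal two_ne_zero ENNReal.ofNat_ne_top, h2] at h
    simp only [enorm_eq_nnnorm] at h
    intro hcon
    rw [hcon] at h
    simp [ENNReal.top_rpow_of_pos] at h
  have hbound_fin : ∫⁻ x, ((2:ℝ≥0∞) * ‖g x‖₊) ^ (2:ℝ) ∂μ ≠ ∞ := by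
    have heq : ∀ x : O, ((2:ℝ≥0∞) * ‖g x‖₊) ^ (2:ℝ) = (2:ℝ≥0∞)^(2:ℝ) * (‖g x‖₊ : ℝ≥0∞) ^ (2:ℝ) :=
      fun x => ENNReal.mul_rpow_of_nonneg _ _ (by norm_num)
    simp_rw [heq]
    rw [lintegral_const_mul' _ _ (ENNReal.rpow_ne_top_of_nonneg (by norm_num) ENNReal.ofNat_ne_top)]
    exact ENNReal.mul_ne_top (ENNReal.rpow_ne_top_of_nonneg (by norm_num) ENNReal.ofNat_ne_top) hgfin
  have hlim : Filter.Tendsto (fun k => ∫⁻ x, (‖f k x - g x‖₊ : ℝ≥0∞) ^ (2:ℝ) ∂μ) atTop (nhds 0) := by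
    have h0 : (0 : ℝ≥0∞) = ∫⁻ (_ : O), (fun _ => (0:ℝ≥0∞)) 0 ∂μ := by simp
    have htend := tendsto_lintegral_of_dominated_convergence' (μ := μ)
      (F := fun k x => (‖f k x - g x‖₊ : ℝ≥0∞) ^ (2:ℝ)) (f := fun _ => 0)
      (bound := fun x => ((2:ℝ≥0∞) * ‖g x‖₊) ^ (2:ℝ))
      (fun k => (((hfm k).sub hg.aestronglyMeasurable).enorm).pow_const _)
      (fun k => by
        filter_upwards [hdom k] with x hx
        apply ENNReal.rpow_le_rpow _ (by norm_num : (0:ℝ) ≤ 2)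
        calc (‖f k x - g x‖₊ : ℝ≥0∞) ≤ (‖f k x‖₊ : ℝ≥0∞) + ‖g x‖₊ := by
              rw [← ENNReal.coe_add]; exact ENNReal.coe_le_coe.2 (nnnorm_sub_le _ _)
          _ ≤ (‖g x‖₊ : ℝ≥0∞) + ‖g x‖₊ := add_le_add_left (hnn hx) _
          _ = 2 * ‖g x‖₊ := (two_mul _).symm)
      hbound_fin
      (by
        filter_upwards [hae] with x hx
        have h1 : Filter.Tendsto (fun k => f k x - g x) atTop (nhds 0) := by
          have := hx.sub (tendsto_const_nhds (x := g x))
          simpa using this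
        have h2' : Filter.Tendsto (fun k => (‖f k x - g x‖₊ : ℝ≥0∞)) atTop (nhds 0) := by
          rw [← ENNReal.coe_zero]
          apply ENNReal.tendsto_coe.2
          have := (continuous_nnnorm.tendsto (0:ℝ)).comp h1
          simpa [Function.comp_def] using this
        have h3' := (ENNReal.continuous_rpow_const (y := (2:ℝ))).tendsto 0
        have := h3'.comp h2'
        simpa [ENNReal.zero_rpow_of_pos, Function.comp_def] using this)
    simpa using htend
  have heq : (fun k => eLpNorm (f k - g) 2 μ)
      = fun k => (∫⁻ x, (‖f k x - g x‖₊ : ℝ≥0∞) ^ (2:ℝ) ∂μ) ^ (1/(2:ℝ)) := by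
    funext k
    rw [eLpNorm_eq_lintegral_rpow_enorm_toReal two_ne_zero ENNReal.ofNat_ne_top, h2]
    rfl
  rw [heq]
  have h3' := (ENNReal.continuous_rpow_const (y := (1/(2:ℝ)))).tendsto 0
  have := h3'.comp hlim
  simpa [ENNReal.zero_rpow_of_pos, Function.comp_def] using this

lemma exists_ae_tendsto_of_tendsto_Lp {f : ℕ → Lp ℝ 2 μ} {g : Lp ℝ 2 μ}
    (h : Filter.Tendsto f atTop (nhds g)) :
    ∃ ks : ℕ → ℕ, StrictMono ks ∧
      ∀ᵐ x ∂μ, Filter.Tendsto (fun i => f (ks i) x) atTop (nhds (g x)) := by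
  have h1 : Filter.Tendsto (fun n => eLpNorm (⇑(f n) - ⇑g) 2 μ) atTop (nhds 0) :=
    (Lp.tendsto_Lp_iff_tendsto_eLpNorm' f g).mp h
  have h2 : TendstoInMeasure μ (fun n => ⇑(f n)) atTop ⇑g :=
    tendstoInMeasure_of_tendsto_eLpNorm (p := 2) two_ne_zero
      (fun n => Lp.aestronglyMeasurable _) (Lp.aestronglyMeasurable _) h1
  exact h2.exists_seq_tendsto_ae

end Meas

/-- generalized Jensen inequality plus `L¹`-contractivity.  Let `T`
be a linear sub-Markovian operator on `L²(O,μ)` which is also an `L¹(O,μ)`-contraction,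
and let `j : ℝ → [0,∞)` be convex with `j 0 = 0`.  Then for every `v ∈ L²(O,μ)` with
`j ∘ v ∈ L¹(O,μ)` one has `‖j(Tv)‖_{L¹} ≤ ‖j(v)‖_{L¹}`. -/
theorem L1_norm_j_Tv_le
    {O : Type*} [MeasurableSpace O] (μ : Measure O) [SigmaFinite μ]
    (T : Lp ℝ 2 μ →L[ℝ] Lp ℝ 2 μ)
    -- T is sub-Markovian
    (hTsubMarkov : ∀ φ : Lp ℝ 2 μ,
      (∀ᵐ x ∂μ, 0 ≤ φ x ∧ φ x ≤ 1) → (∀ᵐ x ∂μ, 0 ≤ T φ x ∧ T φ x ≤ 1))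
    -- T is an L¹-contraction
    (hTL1contr : ∀ φ : Lp ℝ 2 μ, eLpNorm (⇑(T φ)) 1 μ ≤ eLpNorm (⇑φ) 1 μ)
    -- j : ℝ → ℝ₊ convex with j 0 = 0
    (j : ℝ → ℝ) (hjconv : ConvexOn ℝ Set.univ j)
    (hjpos : ∀ r : ℝ, 0 ≤ j r) (hj0 : j 0 = 0)
    (v : Lp ℝ 2 μ) (hjv : Integrable (fun x => j (v x)) μ) :
    ∫⁻ x, ENNReal.ofReal (j (T v x)) ∂μ ≤ ∫⁻ x, ENNReal.ofReal (j (v x)) ∂μ := by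
  -- T is positivity preserving
  have hTpos : ∀ φ : Lp ℝ 2 μ, (∀ᵐ x ∂μ, 0 ≤ φ x) → (∀ᵐ x ∂μ, 0 ≤ T φ x) := by
    intro φ hφ
    have hcont : ∀ k : ℕ, Continuous (fun t : ℝ => min (max t 0) ((k:ℝ)+1)) :=
      fun k => (continuous_id.max continuous_const).min continuous_const
    have hgm : ∀ k : ℕ, MemLp (fun x => min (max (φ x) 0) ((k:ℝ)+1)) 2 μ := by
      intro k
      apply MemLp.of_le (Lp.memLp φ)
        ((hcont k).comp_aestronglyMeasurable (Lp.aestronglyMeasurable φ))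
      apply Filter.Eventually.of_forall
      intro x
      rw [Real.norm_eq_abs, Real.norm_eq_abs]
      have h1 : 0 ≤ min (max (φ x) 0) ((k:ℝ)+1) := le_min (le_max_right _ _) (by positivity)
      rw [abs_of_nonneg h1]
      exact le_trans (min_le_left _ _) (max_le (le_abs_self _) (abs_nonneg _))
    set G : ℕ → Lp ℝ 2 μ := fun k => (hgm k).toLp _ with hG
    have hGnn : ∀ k, ∀ᵐ x ∂μ, 0 ≤ T (G k) x := by
      intro k
      have hcpos : (0:ℝ) < (k:ℝ)+1 := by positivity
      have hsub := hTsubMarkov ((((k:ℝ)+1)⁻¹) • G k) ?_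
      · rw [_root_.map_smul] at hsub
        filter_upwards [hsub, Lp.coeFn_smul (((k:ℝ)+1)⁻¹) (T (G k))] with x h1 h2
        rw [h2] at h1
        simp only [Pi.smul_apply, smul_eq_mul] at h1
        by_contra hcon
        push_neg at hcon
        have := mul_neg_of_pos_of_neg (inv_pos.2 hcpos) hcon
        linarith [h1.1]
      · filter_upwards [Lp.coeFn_smul (((k:ℝ)+1)⁻¹) (G k), (hgm k).coeFn_toLp] with x h1 h2
        rw [h1]
        simp only [Pi.smul_apply, smul_eq_mul]
        rw [h2]
        constructor
        · apply mul_nonneg (le_of_lt (inv_pos.2 hcpos))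
          exact le_min (le_max_right _ _) (by positivity)
        · have hle : min (max (φ x) 0) ((k:ℝ)+1) ≤ (k:ℝ)+1 := min_le_right _ _
          calc ((k:ℝ)+1)⁻¹ * min (max (φ x) 0) ((k:ℝ)+1)
              ≤ ((k:ℝ)+1)⁻¹ * ((k:ℝ)+1) :=
                mul_le_mul_of_nonneg_left hle (le_of_lt (inv_pos.2 hcpos))
            _ = 1 := inv_mul_cancel₀ (ne_of_gt hcpos)
    have hGtend : Filter.Tendsto G atTop (nhds φ) := by
      rw [Lp.tendsto_Lp_iff_tendsto_eLpNorm']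
      have hcongr : ∀ k, eLpNorm (⇑(G k) - ⇑φ) 2 μ
          = eLpNorm ((fun x => min (max (φ x) 0) ((k:ℝ)+1)) - ⇑φ) 2 μ :=
        fun k => eLpNorm_congr_ae (EventuallyEq.sub ((hgm k).coeFn_toLp) (EventuallyEq.refl _ _))
      simp_rw [hcongr]
      apply tendsto_eLpNorm_two_sub (Lp.memLp φ)
        (fun k => (hcont k).comp_aestronglyMeasurable (Lp.aestronglyMeasurable φ))
      · intro k
        apply Filter.Eventually.of_forall
        intro x
        have h1 : 0 ≤ min (max (φ x) 0) ((k:ℝ)+1) := le_min (le_max_right _ _) (by positivity)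
        rw [abs_of_nonneg h1]
        exact le_trans (min_le_left _ _) (max_le (le_abs_self _) (abs_nonneg _))
      · filter_upwards [hφ] with x hx
        have hev : ∀ᶠ k : ℕ in atTop, min (max (φ x) 0) ((k:ℝ)+1) = φ x := by
          obtain ⟨K, hK⟩ := exists_nat_ge (φ x)
          refine eventually_atTop.2 ⟨K, fun k hk => ?_⟩
          rw [max_eq_left hx, min_eq_left]
          have : (K:ℝ) ≤ (k:ℝ) := Nat.cast_le.2 hk
          linarith
        exact Filter.Tendsto.congr' (hev.mono fun k hk => hk.symm) tendsto_const_nhds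
    have hTG := (T.continuous.tendsto φ).comp hGtend
    obtain ⟨ks, hks, haes⟩ := exists_ae_tendsto_of_tendsto_Lp hTG
    have hall : ∀ᵐ x ∂μ, ∀ i, 0 ≤ T (G (ks i)) x := ae_all_iff.2 fun i => hGnn (ks i)
    filter_upwards [haes, hall] with x h1 h2
    exact ge_of_tendsto h1 (Filter.Eventually.of_forall h2)
  -- T is monotone
  have hTmono : ∀ f g : Lp ℝ 2 μ, (∀ᵐ x ∂μ, f x ≤ g x) → (∀ᵐ x ∂μ, T f x ≤ T g x) := by
    intro f g hfg
    have h0 : ∀ᵐ x ∂μ, 0 ≤ (g - f) x := by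
      filter_upwards [hfg, Lp.coeFn_sub g f] with x h1 h2
      rw [h2]; simp only [Pi.sub_apply]; linarith
    have h1 := hTpos _ h0
    rw [_root_.map_sub] at h1
    filter_upwards [h1, Lp.coeFn_sub (T g) (T f)] with x h1 h2
    rw [h2] at h1; simp only [Pi.sub_apply] at h1; linarith
  -- affine pieces
  obtain ⟨e, he⟩ := exists_surjective_nat ℚ
  choose a ha using fun q : ℚ => exists_subgradient hjconv (q : ℝ)
  set A : ℕ → ℝ := fun n => a (e n) with hA
  set B : ℕ → ℝ := fun n => j (e n) - a (e n) * (e n) with hB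
  set L : ℕ → ℝ → ℝ := fun n r => A n * r + B n with hL
  have hLle : ∀ n r, L n r ≤ j r := by
    intro n r
    have h1 := ha (e n) r
    have h2 : L n r = j (e n) + a (e n) * (r - (e n : ℝ)) := by
      simp only [hL, hA, hB]; ring
    rw [h2]; exact h1
  have hBle : ∀ n, B n ≤ 0 := by
    intro n
    have h1 := ha (e n) 0
    rw [hj0] at h1
    have h2 : B n = j (e n) + a (e n) * (0 - (e n : ℝ)) := by
      simp only [hB]; ring
    rw [h2]; exact h1
  have hLcont : ∀ n, Continuous (L n) := fun n => by
    simp only [hL]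
    exact (continuous_const.mul continuous_id).add continuous_const
  have hLbnd : ∀ n r, L n r ≤ |A n| * |r| := by
    intro n r
    have h1 : A n * r ≤ |A n * r| := le_abs_self _
    rw [abs_mul] at h1
    have h2 : L n r = A n * r + B n := rfl
    rw [h2]
    linarith [hBle n]
  -- pointwise convergence of the approximations
  have hjm_tendsto : ∀ s : ℝ, Filter.Tendsto (fun m => jmF L m s) atTop (nhds (j s)) := by
    intro s
    have hmono := jmF_mono L s
    have hub : ∀ m, jmF L m s ≤ j s := fun m => jmF_le hjpos hLle m s
    have hbdd : BddAbove (Set.range fun m => jmF L m s) := by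
      refine ⟨j s, ?_⟩
      rintro t ⟨m, rfl⟩
      exact hub m
    have htend := tendsto_atTop_ciSup hmono hbdd
    have heq : (⨆ m, jmF L m s) = j s := by
      apply le_antisymm (ciSup_le hub)
      apply le_of_forall_pos_le_add
      intro ε hε
      obtain ⟨q, hq⟩ := dense_support hjconv a ha s hε
      obtain ⟨n, hn⟩ := he q
      have h1 : L n s = j q + a q * (s - q) := by
        simp only [hL, hA, hB, hn]; ring
      have h2 : L n s ≤ jmF L (n+1) s := le_jmF L (Nat.lt_succ_self n) s
      have h3 : jmF L (n+1) s ≤ ⨆ m, jmF L m s := le_ciSup hbdd (n+1)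
      rw [h1] at h2
      linarith
    rwa [heq] at htend
  -- spanning sets
  have hAkm : ∀ k, MeasurableSet (spanningSets μ k) := measurableSet_spanningSets μ
  have hvmem : ∀ k, MemLp ((spanningSets μ k).indicator (⇑v)) 2 μ :=
    fun k => (Lp.memLp v).indicator (hAkm k)
  set vk : ℕ → Lp ℝ 2 μ := fun k => (hvmem k).toLp _ with hvk
  have hemem : ∀ k, MemLp ((spanningSets μ k).indicator (fun _ => (1:ℝ))) 2 μ := fun k =>
    memLp_indicator_const 2 (hAkm k) 1 (Or.inr (measure_spanningSets_lt_top μ k).ne)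
  set ek : ℕ → Lp ℝ 2 μ := fun k => (hemem k).toLp _ with heq_ek
  have hvk_tend : Filter.Tendsto vk atTop (nhds v) := by
    rw [Lp.tendsto_Lp_iff_tendsto_eLpNorm']
    have hcongr : ∀ k, eLpNorm (⇑(vk k) - ⇑v) 2 μ
        = eLpNorm ((spanningSets μ k).indicator (⇑v) - ⇑v) 2 μ :=
      fun k => eLpNorm_congr_ae (EventuallyEq.sub ((hvmem k).coeFn_toLp) (EventuallyEq.refl _ _))
    simp_rw [hcongr]
    apply tendsto_eLpNorm_two_sub (Lp.memLp v)
      (fun k => (Lp.aestronglyMeasurable v).indicator (hAkm k))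
    · intro k
      apply Filter.Eventually.of_forall
      intro x
      by_cases hx : x ∈ spanningSets μ k
      · rw [Set.indicator_of_mem hx]
      · rw [Set.indicator_of_notMem hx]
        simp [abs_nonneg]
    · apply Filter.Eventually.of_forall
      intro x
      have hx : ∃ k, x ∈ spanningSets μ k := by
        have h1 : x ∈ ⋃ k, spanningSets μ k := by
          rw [iUnion_spanningSets]; trivial
        rw [Set.mem_iUnion] at h1; exact h1
      obtain ⟨k0, hk0⟩ := hx
      apply Filter.Tendsto.congr' _ tendsto_const_nhds
      refine (eventually_atTop.2 ⟨k0, fun k hk => ?_⟩)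
      exact (Set.indicator_of_mem (monotone_spanningSets μ hk hk0) (⇑v)).symm
  have hTvk := (T.continuous.tendsto v).comp hvk_tend
  obtain ⟨ks, hksmono, hksae⟩ := exists_ae_tendsto_of_tendsto_Lp hTvk
  have hek01 : ∀ k, ∀ᵐ x ∂μ, 0 ≤ ek k x ∧ ek k x ≤ 1 := by
    intro k
    filter_upwards [(hemem k).coeFn_toLp] with x hx
    rw [hx]
    by_cases hm : x ∈ spanningSets μ k
    · rw [Set.indicator_of_mem hm]; norm_num
    · rw [Set.indicator_of_notMem hm]; norm_num
  have hTek := fun k => hTsubMarkov (ek k) (hek01 k)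
  -- main estimate for each m
  have hchain : ∀ m : ℕ, ∫⁻ x, ENNReal.ofReal (jmF L m (T v x)) ∂μ
      ≤ ∫⁻ x, ENNReal.ofReal (j (v x)) ∂μ := by
    intro m
    have hwmem : MemLp (fun x => jmF L m (v x)) 2 μ := by
      obtain ⟨C, hC0, hCb⟩ := jmF_linear_bound (fun n => |A n|) hLbnd m
      apply MemLp.of_le ((Lp.memLp v).const_mul C)
        ((jmF_continuous hLcont m).comp_aestronglyMeasurable (Lp.aestronglyMeasurable v))
      apply Filter.Eventually.of_forall
      intro x
      rw [Real.norm_eq_abs, Real.norm_eq_abs, abs_of_nonneg (jmF_nonneg L m _), abs_mul]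
      exact le_trans (hCb (v x)) (mul_le_mul_of_nonneg_right (le_abs_self C) (abs_nonneg _))
    set w : Lp ℝ 2 μ := hwmem.toLp _ with hw
    have hwnn : ∀ᵐ x ∂μ, 0 ≤ w x := by
      filter_upwards [hwmem.coeFn_toLp] with x hx
      rw [hx]; exact jmF_nonneg L m _
    have hTwnn := hTpos w hwnn
    have hpiece : ∀ n, n < m → ∀ᵐ x ∂μ, A n * (T v x) + B n ≤ T w x := by
      intro n hn
      have hstep : ∀ k, ∀ᵐ x ∂μ, A n * (T (vk k) x) + B n ≤ T w x := by
        intro k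
        set u : Lp ℝ 2 μ := A n • vk k + B n • ek k with hu
        have hu_coe : ∀ᵐ x ∂μ, u x = A n * ((spanningSets μ k).indicator (⇑v) x)
            + B n * ((spanningSets μ k).indicator (fun _ => (1:ℝ)) x) := by
          filter_upwards [Lp.coeFn_add (A n • vk k) (B n • ek k), Lp.coeFn_smul (A n) (vk k),
            Lp.coeFn_smul (B n) (ek k), (hvmem k).coeFn_toLp, (hemem k).coeFn_toLp]
            with x h1 h2 h3 h4 h5
          rw [hu, h1]
          simp only [Pi.add_apply]
          rw [h2, h3]
          simp only [Pi.smul_apply, smul_eq_mul]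
          rw [h4, h5]
        have hu_le_w : ∀ᵐ x ∂μ, u x ≤ w x := by
          filter_upwards [hu_coe, hwmem.coeFn_toLp] with x h1 h2
          rw [h1, h2]
          by_cases hm' : x ∈ spanningSets μ k
          · rw [Set.indicator_of_mem hm', Set.indicator_of_mem hm']
            have h3 : A n * v x + B n * 1 = L n (v x) := by
              simp only [hL]; ring
            rw [h3]
            exact le_jmF L hn (v x)
          · rw [Set.indicator_of_notMem hm', Set.indicator_of_notMem hm']
            have h3 : A n * 0 + B n * 0 = (0:ℝ) := by ring
            rw [h3]
            exact jmF_nonneg L m (v x)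
        have hmono' := hTmono u w hu_le_w
        have hTu : T u = A n • T (vk k) + B n • T (ek k) := by
          rw [hu, map_add, _root_.map_smul, _root_.map_smul]
        have hTu_coe : ∀ᵐ x ∂μ, T u x = A n * (T (vk k) x) + B n * (T (ek k) x) := by
          rw [hTu]
          filter_upwards [Lp.coeFn_add (A n • T (vk k)) (B n • T (ek k)),
            Lp.coeFn_smul (A n) (T (vk k)), Lp.coeFn_smul (B n) (T (ek k))] with x h1 h2 h3
          rw [h1]
          simp only [Pi.add_apply]
          rw [h2, h3]
          simp only [Pi.smul_apply, smul_eq_mul]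
        filter_upwards [hmono', hTu_coe, hTek k] with x h1 h2 h3
        have h4 : B n * 1 ≤ B n * (T (ek k) x) := mul_le_mul_of_nonpos_left h3.2 (hBle n)
        calc A n * (T (vk k) x) + B n ≤ A n * (T (vk k) x) + B n * (T (ek k) x) := by linarith
          _ = T u x := h2.symm
          _ ≤ T w x := h1
      have hallk : ∀ᵐ x ∂μ, ∀ i, A n * (T (vk (ks i)) x) + B n ≤ T w x :=
        ae_all_iff.2 fun i => hstep (ks i)
      filter_upwards [hallk, hksae] with x h1 h2
      have hlim : Filter.Tendsto (fun i => A n * (T (vk (ks i)) x) + B n) atTop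
          (nhds (A n * (T v x) + B n)) := (h2.const_mul (A n)).add_const (B n)
      exact le_of_tendsto hlim (Filter.Eventually.of_forall h1)
    have hjm_le : ∀ᵐ x ∂μ, jmF L m (T v x) ≤ T w x := by
      have hall : ∀ᵐ x ∂μ, ∀ n, n < m → A n * (T v x) + B n ≤ T w x := by
        apply ae_all_iff.2
        intro n
        by_cases hn : n < m
        · exact (hpiece n hn).mono fun x hx _ => hx
        · exact Filter.Eventually.of_forall fun x hn' => absurd hn' hn
      filter_upwards [hall, hTwnn] with x h1 h2
      exact jmF_le_of_pieces h2 fun n hn => h1 n hn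
    calc ∫⁻ x, ENNReal.ofReal (jmF L m (T v x)) ∂μ
        ≤ ∫⁻ x, ENNReal.ofReal (T w x) ∂μ :=
          lintegral_mono_ae (hjm_le.mono fun x h => ENNReal.ofReal_le_ofReal h)
      _ ≤ ∫⁻ x, (‖T w x‖₊ : ℝ≥0∞) ∂μ := lintegral_mono fun x => by
            rw [← enorm_eq_nnnorm, Real.enorm_eq_ofReal_abs]
            exact ENNReal.ofReal_le_ofReal (le_abs_self _)
      _ = eLpNorm (⇑(T w)) 1 μ := (eLpNorm_one_eq_lintegral_enorm (f := ⇑(T w))).symm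
      _ ≤ eLpNorm (⇑w) 1 μ := hTL1contr w
      _ = ∫⁻ x, (‖w x‖₊ : ℝ≥0∞) ∂μ := eLpNorm_one_eq_lintegral_enorm (f := ⇑w)
      _ = ∫⁻ x, ENNReal.ofReal (jmF L m (v x)) ∂μ := by
            apply lintegral_congr_ae
            filter_upwards [hwmem.coeFn_toLp] with x hx
            rw [hx, ← enorm_eq_nnnorm, Real.enorm_eq_ofReal (jmF_nonneg L m _)]
      _ ≤ ∫⁻ x, ENNReal.ofReal (j (v x)) ∂μ := lintegral_mono fun x =>
            ENNReal.ofReal_le_ofReal (jmF_le hjpos hLle m _)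
  -- monotone convergence in m
  have hTv_meas : Measurable (⇑(T v)) := (Lp.stronglyMeasurable (T v)).measurable
  have htends : Filter.Tendsto (fun m => ∫⁻ x, ENNReal.ofReal (jmF L m (T v x)) ∂μ) atTop
      (nhds (∫⁻ x, ENNReal.ofReal (j (T v x)) ∂μ)) := by
    apply lintegral_tendsto_of_tendsto_of_monotone
    · intro m
      exact (ENNReal.measurable_ofReal.comp
        ((jmF_continuous hLcont m).measurable.comp hTv_meas)).aemeasurable
    · apply Filter.Eventually.of_forall
      intro x m1 m2 h12
      exact ENNReal.ofReal_le_ofReal (jmF_mono L _ h12)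
    · apply Filter.Eventually.of_forall
      intro x
      exact (ENNReal.continuous_ofReal.tendsto _).comp (hjm_tendsto (T v x))
  exact le_of_tendsto htends (Filter.Eventually.of_forall hchain)
end

section
/- Fix α > 0, λ > 0, and let H = L²(ℝ₊, e^{-αx}dx). For y ∈ H with 0 ≤ y ≤ 1 a.e., let y_λ ∈ H be an absolutely continuous solution of y_λ − λ y_λ' + λα y_λ = y with y_λ' ∈ H. Then y_λ ≤ 1 a.e. in ℝ₊. -/
open MeasureTheory
open Set

set_option maxHeartbeats 800000

lemma exp_ftc {c a b : ℝ} (hab : a ≤ b) :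
    ∫ s in Set.Ioc a b, c * Real.exp (-(c*s)) = Real.exp (-(c*a)) - Real.exp (-(c*b)) := by
  rw [← intervalIntegral.integral_of_le hab]
  have h : ∀ s ∈ Set.uIcc a b, HasDerivAt (fun u => -Real.exp (-(c*u))) (c * Real.exp (-(c*s))) s := by
    intro s _
    have h1 : HasDerivAt (fun u : ℝ => -(c*u)) (-c) s := by
      have := ((hasDerivAt_id s).const_mul c).neg
      rw [mul_one] at this
      exact this
    have h2 := (h1.exp).neg
    refine h2.congr_deriv ?_
    ring
  have := intervalIntegral.integral_eq_sub_of_hasDerivAt (fun s hs => h s hs)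
    ((Continuous.intervalIntegrable (by continuity) a b))
  rw [this]
  ring

lemma ibp_exp (yl' : ℝ → ℝ) (c : ℝ) {x : ℝ} (hx : 0 ≤ x)
    (hloc : ∀ b : ℝ, IntegrableOn yl' (Set.Ioc 0 b)) :
    ∫ t in Set.Ioc 0 x, Real.exp (-(c*t)) * yl' t
      = Real.exp (-(c*x)) * (∫ t in Set.Ioc 0 x, yl' t)
        + ∫ s in Set.Ioc 0 x, c * Real.exp (-(c*s)) * (∫ t in Set.Ioc 0 s, yl' t) := by
  set μ := volume.restrict (Set.Ioc (0:ℝ) x) with hμ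
  set g : ℝ × ℝ → ℝ := fun p => yl' p.1 * (c * Real.exp (-(c * p.2))) with hg
  set S : Set (ℝ × ℝ) := {p : ℝ × ℝ | p.1 < p.2} with hS
  have hSm : MeasurableSet S := measurableSet_lt measurable_fst measurable_snd
  have hcont : Continuous fun s : ℝ => c * Real.exp (-(c*s)) := by fun_prop
  have hgint : Integrable g (μ.prod μ) :=
    Integrable.mul_prod (hloc x) (hcont.integrableOn_Ioc)
  have hfint : Integrable (S.indicator g) (μ.prod μ) := hgint.indicator hSm
  have swap := integral_integral_swap (f := fun t s => S.indicator g (t, s)) (by exact hfint)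
  -- LHS inner integral
  have L : ∀ t ∈ Set.Ioc (0:ℝ) x,
      (∫ s, S.indicator g (t, s) ∂μ) = yl' t * (Real.exp (-(c*t)) - Real.exp (-(c*x))) := by
    intro t ht
    have h1 : (fun s => S.indicator g (t, s))
        = (Set.Ioi t).indicator (fun s => yl' t * (c * Real.exp (-(c*s)))) := by
      ext s
      by_cases h : t < s <;> simp [hS, Set.indicator, h, hg]
    rw [h1, hμ, integral_indicator measurableSet_Ioi, Measure.restrict_restrict measurableSet_Ioi]
    have h2 : Set.Ioi t ∩ Set.Ioc 0 x = Set.Ioc t x := by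
      ext u; simp only [Set.mem_inter_iff, Set.mem_Ioi, Set.mem_Ioc]
      constructor
      · rintro ⟨h3, _, h5⟩; exact ⟨h3, h5⟩
      · rintro ⟨h3, h4⟩; exact ⟨h3, ht.1.trans h3, h4⟩
    rw [h2, integral_const_mul, exp_ftc ht.2]
  -- RHS inner integral
  have R : ∀ s ∈ Set.Ioc (0:ℝ) x,
      (∫ t, S.indicator g (t, s) ∂μ)
        = c * Real.exp (-(c*s)) * (∫ t in Set.Ioc 0 s, yl' t) := by
    intro s hs
    have h1 : (fun t => S.indicator g (t, s))
        = (Set.Iio s).indicator (fun t => yl' t * (c * Real.exp (-(c*s)))) := by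
      ext t
      by_cases h : t < s <;> simp [hS, Set.indicator, h, hg]
    rw [h1, hμ, integral_indicator measurableSet_Iio, Measure.restrict_restrict measurableSet_Iio]
    have h2 : Set.Iio s ∩ Set.Ioc 0 x = Set.Ioo 0 s := by
      ext u; simp only [Set.mem_inter_iff, Set.mem_Iio, Set.mem_Ioc, Set.mem_Ioo]
      constructor
      · rintro ⟨h3, h4, _⟩; exact ⟨h4, h3⟩
      · rintro ⟨h3, h4⟩; exact ⟨h4, h3, h4.le.trans hs.2⟩
    rw [h2, integral_mul_const, ← integral_Ioc_eq_integral_Ioo]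
    ring
  rw [setIntegral_congr_fun measurableSet_Ioc L, setIntegral_congr_fun measurableSet_Ioc R] at swap
  have hbd : ∀ᵐ t ∂μ, ‖Real.exp (-(c*t))‖ ≤ Real.exp (|c| * x) := by
    filter_upwards [ae_restrict_mem measurableSet_Ioc] with t ht
    rw [Real.norm_eq_abs, Real.abs_exp]
    apply Real.exp_le_exp.2
    calc -(c*t) ≤ |c*t| := neg_le_abs _
    _ = |c| * |t| := abs_mul _ _
    _ = |c| * t := by rw [abs_of_pos ht.1]
    _ ≤ |c| * x := by nlinarith [abs_nonneg c, ht.2]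
  have hint1 : Integrable (fun t => Real.exp (-(c*t)) * yl' t) μ :=
    Integrable.bdd_mul (hloc x) (Continuous.aestronglyMeasurable (by fun_prop)) hbd
  have h4 : (fun t => yl' t * (Real.exp (-(c*t)) - Real.exp (-(c*x))))
      = fun t => Real.exp (-(c*t)) * yl' t - Real.exp (-(c*x)) * yl' t := by
    funext t; ring
  rw [h4, integral_sub hint1 (((hloc x)).const_mul _), integral_const_mul] at swap
  linarith [swap]


/-- Fix `α > 0`, `λ > 0`, and let `H = L²(ℝ₊, e^{-αx}dx)`.  For
`y ∈ H` with `0 ≤ y ≤ 1` a.e. on `ℝ₊`, let `y_λ ∈ H` be an absolutely continuous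
solution of `y_λ - λ y_λ' + λ α y_λ = y` with `y_λ' ∈ H`.  Then `y_λ ≤ 1` a.e. on
`ℝ₊`. -/
theorem resolvent_subMarkov_upper
    (α lam : ℝ) (hα : 0 < α) (hlam : 0 < lam)
    (y yl yl' : ℝ → ℝ)
    -- y ∈ L²_{-α} with 0 ≤ y ≤ 1 a.e. on ℝ₊
    (hy2 : IntegrableOn (fun x => y x ^ 2 * Real.exp (-(α * x))) (Set.Ici 0))
    (hy01 : ∀ᵐ x ∂(volume.restrict (Set.Ici (0:ℝ))), 0 ≤ y x ∧ y x ≤ 1)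
    -- y_λ is absolutely continuous on ℝ₊ with a.e. derivative y_λ'
    (hloc : ∀ x : ℝ, IntegrableOn yl' (Set.Ioc 0 x))
    (hAC : ∀ x : ℝ, 0 ≤ x → yl x = yl 0 + ∫ t in (0:ℝ)..x, yl' t)
    -- y_λ, y_λ' ∈ L²_{-α}
    (hyl2 : IntegrableOn (fun x => yl x ^ 2 * Real.exp (-(α * x))) (Set.Ici 0))
    (hyl'2 : IntegrableOn (fun x => yl' x ^ 2 * Real.exp (-(α * x))) (Set.Ici 0))
    -- the resolvent equation y_λ - λ y_λ' + λ α y_λ = y a.e. on ℝ₊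
    (heq : ∀ᵐ x ∂(volume.restrict (Set.Ici (0:ℝ))),
      yl x - lam * yl' x + lam * α * yl x = y x) :
    ∀ᵐ x ∂(volume.restrict (Set.Ici (0:ℝ))), yl x ≤ 1 := by
  have hlam0 : lam ≠ 0 := ne_of_gt hlam
  set c : ℝ := α + 1/lam with hc_def
  have hc : 0 < c := by positivity
  have hc0 : c ≠ 0 := ne_of_gt hc
  have hlamc : lam * c = lam * α + 1 := by rw [hc_def, mul_add, mul_one_div_cancel hlam0]
  set F : ℝ → ℝ := fun s => ∫ t in Set.Ioc 0 s, yl' t with hF_def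
  have hFcont : ∀ b : ℝ, ContinuousOn F (Set.Icc 0 b) := fun b =>
    intervalIntegral.continuousOn_primitive ((integrableOn_Icc_iff_integrableOn_Ioc).mpr (hloc b))
  have hF_eq : ∀ s : ℝ, 0 ≤ s → yl s = yl 0 + F s := by
    intro s hs; rw [hAC s hs, intervalIntegral.integral_of_le hs]
  -- Step 1: the integrated resolvent identity
  have star : ∀ x : ℝ, 0 ≤ x →
      Real.exp (-(c*x)) * yl x - yl 0
        = -(1/lam) * ∫ t in Set.Ioc 0 x, Real.exp (-(c*t)) * y t := by
    intro x hx
    have key := ibp_exp yl' c hx hloc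
    have hcont1 : Continuous fun s : ℝ => c * Real.exp (-(c*s)) := by fun_prop
    have hIF : IntegrableOn (fun s => c * Real.exp (-(c*s)) * F s) (Set.Ioc 0 x) := by
      exact (((hcont1.continuousOn).mul (hFcont x)).integrableOn_Icc).mono_set
        Set.Ioc_subset_Icc_self
    have hIconst : IntegrableOn (fun s : ℝ => c * Real.exp (-(c*s))) (Set.Ioc 0 x) :=
      hcont1.integrableOn_Ioc
    have hIyl : IntegrableOn (fun s => c * Real.exp (-(c*s)) * yl s) (Set.Ioc 0 x) := by
      apply IntegrableOn.congr_fun (hIF.add (hIconst.mul_const (yl 0))) ?_ measurableSet_Ioc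
      intro s hs
      simp only [Pi.add_apply]
      rw [hF_eq s hs.1.le]
      ring
    have hconst_val : ∫ s in Set.Ioc (0:ℝ) x, c * Real.exp (-(c*s))
        = 1 - Real.exp (-(c*x)) := by
      rw [exp_ftc hx]; simp
    have step2 : ∫ s in Set.Ioc (0:ℝ) x, c * Real.exp (-(c*s)) * F s
        = (∫ s in Set.Ioc (0:ℝ) x, c * Real.exp (-(c*s)) * yl s)
          - yl 0 * (1 - Real.exp (-(c*x))) := by
      rw [← hconst_val]
      rw [show (∫ s in Set.Ioc (0:ℝ) x, c * Real.exp (-(c*s)) * F s)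
          = ∫ s in Set.Ioc (0:ℝ) x,
              (c * Real.exp (-(c*s)) * yl s - yl 0 * (c * Real.exp (-(c*s)))) from
        setIntegral_congr_fun measurableSet_Ioc (by
          intro s hs
          dsimp only
          rw [hF_eq s hs.1.le]
          ring)]
      rw [integral_sub hIyl (hIconst.const_mul (yl 0)), integral_const_mul]
    -- a.e. rewriting of the integrand using the resolvent equation
    have heq' : ∀ᵐ t ∂(volume.restrict (Set.Ioc (0:ℝ) x)),
        Real.exp (-(c*t)) * yl' t - c * Real.exp (-(c*t)) * yl t
          = -(1/lam) * (Real.exp (-(c*t)) * y t) := by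
      filter_upwards [ae_restrict_of_ae_restrict_of_subset
        (Set.Ioc_subset_Icc_self.trans Set.Icc_subset_Ici_self) heq] with t ht
      have h2 : yl' t - c * yl t = -(1/lam) * y t := by
        have h3 : lam * yl' t = (lam * c) * yl t - y t := by rw [hlamc]; linarith
        field_simp
        nlinarith [h3]
      calc Real.exp (-(c*t)) * yl' t - c * Real.exp (-(c*t)) * yl t
          = Real.exp (-(c*t)) * (yl' t - c * yl t) := by ring
        _ = Real.exp (-(c*t)) * (-(1/lam) * y t) := by rw [h2]
        _ = -(1/lam) * (Real.exp (-(c*t)) * y t) := by ring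
    have hbd : ∀ᵐ t ∂(volume.restrict (Set.Ioc (0:ℝ) x)),
        ‖Real.exp (-(c*t))‖ ≤ Real.exp (|c| * x) := by
      filter_upwards [ae_restrict_mem measurableSet_Ioc] with t ht
      rw [Real.norm_eq_abs, Real.abs_exp]
      apply Real.exp_le_exp.2
      calc -(c*t) ≤ |c*t| := neg_le_abs _
      _ = |c| * |t| := abs_mul _ _
      _ = |c| * t := by rw [abs_of_pos ht.1]
      _ ≤ |c| * x := by nlinarith [abs_nonneg c, ht.2]
    have hEyl' : IntegrableOn (fun t => Real.exp (-(c*t)) * yl' t) (Set.Ioc 0 x) :=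
      Integrable.bdd_mul (hloc x) (Continuous.aestronglyMeasurable (by fun_prop)) hbd
    have comb : (∫ t in Set.Ioc (0:ℝ) x, Real.exp (-(c*t)) * yl' t)
        - (∫ s in Set.Ioc (0:ℝ) x, c * Real.exp (-(c*s)) * yl s)
        = -(1/lam) * ∫ t in Set.Ioc (0:ℝ) x, Real.exp (-(c*t)) * y t := by
      rw [← integral_sub hEyl' hIyl, integral_congr_ae heq', integral_const_mul]
    have hFx : F x = yl x - yl 0 := by rw [hF_eq x hx]; ring
    linear_combination comb - key - step2 - Real.exp (-(c*x)) * hFx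
  -- measurability on Ioi 0
  have hIoiU : Set.Ioi (0:ℝ) = ⋃ n : ℕ, Set.Ioc 0 (n:ℝ) := by
    ext t
    simp only [Set.mem_Ioi, Set.mem_iUnion, Set.mem_Ioc]
    constructor
    · intro ht
      obtain ⟨n, hn⟩ := exists_nat_ge t
      exact ⟨n, ht, hn⟩
    · rintro ⟨n, h1, _⟩; exact h1
  have hyl'm : AEStronglyMeasurable yl' (volume.restrict (Set.Ioi 0)) := by
    rw [hIoiU]
    exact aestronglyMeasurable_iUnion_iff.mpr fun n => (hloc (n:ℝ)).aestronglyMeasurable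
  have hylm : AEStronglyMeasurable yl (volume.restrict (Set.Ioi 0)) := by
    rw [hIoiU]
    refine aestronglyMeasurable_iUnion_iff.mpr fun n => ?_
    have h1 : AEStronglyMeasurable (fun s => yl 0 + F s) (volume.restrict (Set.Icc 0 (n:ℝ))) :=
      (continuousOn_const.add (hFcont n)).aestronglyMeasurable measurableSet_Icc
    have h2 := h1.mono_measure (Measure.restrict_mono Set.Ioc_subset_Icc_self le_rfl)
    apply h2.congr
    rw [Filter.EventuallyEq, ae_restrict_iff' measurableSet_Ioc]
    exact Filter.Eventually.of_forall fun s hs => (hF_eq s hs.1.le).symm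
  have heqIoi := ae_restrict_of_ae_restrict_of_subset Set.Ioi_subset_Ici_self heq
  have hy01Ioi := ae_restrict_of_ae_restrict_of_subset Set.Ioi_subset_Ici_self hy01
  have hym : AEStronglyMeasurable y (volume.restrict (Set.Ioi 0)) := by
    apply ((hylm.sub (hyl'm.const_mul lam)).add (hylm.const_mul (lam*α))).congr
    filter_upwards [heqIoi] with t ht
    simp only [Pi.add_apply, Pi.sub_apply]
    linarith [ht]
  have hym' : AEStronglyMeasurable (fun t => Real.exp (-(c*t)) * y t)
      (volume.restrict (Set.Ioi 0)) :=
    (Continuous.aestronglyMeasurable (by fun_prop)).mul hym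
  have hEexp_int : ∀ x : ℝ, IntegrableOn (fun t => Real.exp (-(c*t))) (Set.Ioi x) := by
    intro x
    have := exp_neg_integrableOn_Ioi x hc
    simpa [neg_mul] using this
  have hEy_int : IntegrableOn (fun t => Real.exp (-(c*t)) * y t) (Set.Ioi 0) := by
    apply Integrable.mono' (hEexp_int 0) hym'
    filter_upwards [hy01Ioi] with t ht
    rw [Real.norm_eq_abs, abs_mul, Real.abs_exp, abs_of_nonneg ht.1]
    nlinarith [Real.exp_pos (-(c*t)), ht.2]
  have hIoi_exp_val : ∀ x : ℝ, ∫ t in Set.Ioi x, Real.exp (-(c*t)) = Real.exp (-(c*x)) / c := by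
    intro x
    have hderiv : ∀ t ∈ Set.Ioi x, HasDerivAt (fun u => -(1/c) * Real.exp (-(c*u)))
        (Real.exp (-(c*t))) t := by
      intro t _
      have h1 : HasDerivAt (fun u : ℝ => -(c*u)) (-c) t := by
        have := ((hasDerivAt_id t).const_mul c).neg
        rw [mul_one] at this
        exact this
      have h2 := (h1.exp).const_mul (-(1/c))
      refine h2.congr_deriv ?_
      field_simp
    have h1 : Filter.Tendsto (fun u : ℝ => c*u) Filter.atTop Filter.atTop :=
      Filter.Tendsto.const_mul_atTop hc Filter.tendsto_id
    have h2 : Filter.Tendsto (fun u : ℝ => -(c*u)) Filter.atTop Filter.atBot :=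
      Filter.tendsto_neg_atBot_iff.mpr h1
    have h3 := Real.tendsto_exp_atBot.comp h2
    have h4 := h3.const_mul (-(1/c))
    have htendsto : Filter.Tendsto (fun u => -(1/c) * Real.exp (-(c*u)))
        Filter.atTop (nhds 0) := by
      simpa [Function.comp] using h4
    have hres := MeasureTheory.integral_Ioi_of_hasDerivAt_of_tendsto
      (Continuous.continuousWithinAt (by fun_prop)) hderiv (hEexp_int x) htendsto
    rw [hres]
    field_simp; ring
  set I : ℝ := ∫ t in Set.Ioi 0, Real.exp (-(c*t)) * y t with hI_def
  set T : ℝ → ℝ := fun x => ∫ t in Set.Ioi x, Real.exp (-(c*t)) * y t with hT_def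
  have hsub : ∀ x : ℝ, 0 ≤ x → Set.Ioi x ⊆ Set.Ici (0:ℝ) :=
    fun x hx t ht => le_trans hx (le_of_lt ht)
  have hsubIoi : ∀ x : ℝ, 0 ≤ x → Set.Ioi x ⊆ Set.Ioi (0:ℝ) :=
    fun x hx => Set.Ioi_subset_Ioi hx
  have hsplit : ∀ x : ℝ, 0 ≤ x →
      (∫ t in Set.Ioc 0 x, Real.exp (-(c*t)) * y t) + T x = I := by
    intro x hx
    rw [hI_def, ← Set.Ioc_union_Ioi_eq_Ioi hx,
      setIntegral_union (Set.Ioc_disjoint_Ioi le_rfl) measurableSet_Ioi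
        (hEy_int.mono_set Set.Ioc_subset_Ioi_self) (hEy_int.mono_set (hsubIoi x hx))]
  have hT0 : ∀ x : ℝ, 0 ≤ x → 0 ≤ T x := by
    intro x hx
    apply MeasureTheory.integral_nonneg_of_ae
    filter_upwards [ae_restrict_of_ae_restrict_of_subset (hsub x hx) hy01] with t ht
    exact mul_nonneg (Real.exp_nonneg _) ht.1
  have hTub : ∀ x : ℝ, 0 ≤ x → T x ≤ Real.exp (-(c*x)) / c := by
    intro x hx
    rw [← hIoi_exp_val x]
    apply MeasureTheory.integral_mono_ae (hEy_int.mono_set (hsubIoi x hx)) (hEexp_int x)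
    filter_upwards [ae_restrict_of_ae_restrict_of_subset (hsub x hx) hy01] with t ht
    nlinarith [Real.exp_pos (-(c*t)), ht.1, ht.2]
  set K : ℝ := yl 0 - (1/lam) * I with hK_def
  have hexp1 : ∀ x : ℝ, Real.exp (c*x) * Real.exp (-(c*x)) = 1 := by
    intro x; rw [← Real.exp_add]; simp
  have formula : ∀ x : ℝ, 0 ≤ x →
      yl x = Real.exp (c*x) * K + (1/lam) * (Real.exp (c*x) * T x) := by
    intro x hx
    have h1 := star x hx
    have h2 := hsplit x hx
    have h4 : Real.exp (-(c*x)) * yl x = K + (1/lam) * T x := by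
      rw [hK_def]; linear_combination h1 - (1/lam) * h2
    calc yl x = Real.exp (c*x) * (Real.exp (-(c*x)) * yl x) := by
          rw [← mul_assoc, hexp1, one_mul]
    _ = Real.exp (c*x) * K + (1/lam) * (Real.exp (c*x) * T x) := by rw [h4]; ring
  have hbound : ∀ x : ℝ, 0 ≤ x → |yl x - Real.exp (c*x) * K| ≤ 1/(lam*c) := by
    intro x hx
    rw [formula x hx]
    have h5 : 0 ≤ (1/lam) * (Real.exp (c*x) * T x) := by
      have := hT0 x hx
      positivity
    have h6 : (1/lam) * (Real.exp (c*x) * T x) ≤ 1/(lam*c) := by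
      have h7 := hTub x hx
      have h9 : Real.exp (c*x) * (Real.exp (-(c*x))/c) = 1/c := by
        rw [mul_div_assoc', hexp1 x]
      calc (1/lam) * (Real.exp (c*x) * T x)
          ≤ (1/lam) * (Real.exp (c*x) * (Real.exp (-(c*x))/c)) := by
            apply mul_le_mul_of_nonneg_left
              (mul_le_mul_of_nonneg_left h7 (Real.exp_nonneg _)) (by positivity)
      _ = 1/(lam*c) := by rw [h9, one_div_mul_one_div]
    have h10 : Real.exp (c*x) * K + (1/lam) * (Real.exp (c*x) * T x) - Real.exp (c*x) * K
        = (1/lam) * (Real.exp (c*x) * T x) := by ring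
    rw [h10, abs_of_nonneg h5]
    exact h6
  have hlamc1 : 1 ≤ lam * c := by nlinarith
  have hK0 : K = 0 := by
    by_contra hKne
    have hKpos : 0 < |K| := abs_pos.mpr hKne
    have htend : Filter.Tendsto (fun x : ℝ => Real.exp (c*x)) Filter.atTop Filter.atTop :=
      Real.tendsto_exp_atTop.comp (Filter.Tendsto.const_mul_atTop hc Filter.tendsto_id)
    obtain ⟨X0, hX0⟩ := Filter.eventually_atTop.mp
      (htend.eventually_ge_atTop (2*(1/(lam*c))/|K|))
    set X := max X0 0 with hX_def
    have hIntX : IntegrableOn (fun x => yl x ^ 2 * Real.exp (-(α * x))) (Set.Ici X) :=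
      hyl2.mono_set (Set.Ici_subset_Ici.mpr (le_max_right _ _))
    have hconst : Integrable (fun _ : ℝ => K^2/4) (volume.restrict (Set.Ici X)) := by
      apply Integrable.mono' hIntX aestronglyMeasurable_const
      rw [ae_restrict_iff' measurableSet_Ici]
      apply Filter.Eventually.of_forall
      intro x hx
      have hx0 : (0:ℝ) ≤ x := le_trans (le_max_right X0 0) hx
      have h7 : 2*(1/(lam*c)) ≤ Real.exp (c*x) * |K| := by
        have h7a := hX0 x (le_trans (le_max_left X0 0) hx)
        calc 2*(1/(lam*c)) = (2*(1/(lam*c))/|K|)*|K| := by field_simp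
        _ ≤ Real.exp (c*x) * |K| := mul_le_mul_of_nonneg_right h7a hKpos.le
      have hb := hbound x hx0
      have habs : |Real.exp (c*x) * K| ≤ |yl x| + |yl x - Real.exp (c*x) * K| := by
        have h := abs_sub_abs_le_abs_sub (Real.exp (c*x)*K) (yl x)
        rw [abs_sub_comm] at h
        linarith
      have habs2 : |Real.exp (c*x) * K| = Real.exp (c*x) * |K| := by
        rw [abs_mul, Real.abs_exp]
      have h8 : Real.exp (c*x)*|K|/2 ≤ |yl x| := by
        rw [habs2] at habs
        have hM : (0:ℝ) < 1/(lam*c) := by positivity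
        linarith
      have h10 : (Real.exp (c*x)*|K|/2)^2 ≤ yl x ^2 := by
        have := pow_le_pow_left₀ (by positivity) h8 2
        rwa [sq_abs] at this
      have h11 : (1:ℝ) ≤ Real.exp (c*x)^2 * Real.exp (-(α*x)) := by
        have he : Real.exp (c*x)^2 * Real.exp (-(α*x)) = Real.exp ((2*c-α)*x) := by
          rw [sq, ← Real.exp_add, ← Real.exp_add]; ring_nf
        rw [he]
        apply Real.one_le_exp
        have h2c : 0 < 2*c - α := by
          rw [hc_def]
          have := one_div_pos.mpr hlam
          nlinarith
        nlinarith
      rw [Real.norm_eq_abs, abs_of_nonneg (by positivity : (0:ℝ) ≤ K^2/4)]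
      have h12 := mul_le_mul_of_nonneg_right h10 (Real.exp_nonneg (-(α*x)))
      have h13 : (Real.exp (c*x)*|K|/2)^2 * Real.exp (-(α*x))
          = K^2/4 * (Real.exp (c*x)^2 * Real.exp (-(α*x))) := by
        rw [div_pow, mul_pow, sq_abs]
        ring
      calc K^2/4 ≤ K^2/4 * (Real.exp (c*x)^2 * Real.exp (-(α*x))) :=
            le_mul_of_one_le_right (by positivity) h11
      _ = (Real.exp (c*x)*|K|/2)^2 * Real.exp (-(α*x)) := h13.symm
      _ ≤ yl x ^2 * Real.exp (-(α*x)) := h12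
    rw [integrable_const_iff, isFiniteMeasure_iff] at hconst
    rcases hconst with h | h
    · have hK2 : K^2 = 0 := by clear_value K; linarith [sq_nonneg K]
      exact hKne ((pow_eq_zero_iff two_ne_zero).mp hK2)
    · rw [Measure.restrict_apply_univ, Real.volume_Ici] at h
      exact (lt_irrefl _ h)
  filter_upwards [ae_restrict_mem measurableSet_Ici] with x hx
  have hb := hbound x hx
  rw [hK0, mul_zero, sub_zero] at hb
  have h1 := (abs_le.mp hb).2
  have h2 : 1/(lam*c) ≤ 1 := by
    rw [div_le_one (by positivity)]
    exact hlamc1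
  linarith
end

section
/- Fix α > 0, λ > 0, and let H = L²(ℝ₊, e^{-αx}dx). For y ∈ H with y ≥ 0 a.e., let y_λ ∈ H be an absolutely continuous solution of y_λ − λ y_λ' + λα y_λ = y with y_λ' ∈ H. Then y_λ ≥ 0 a.e. in ℝ₊. -/
open MeasureTheory Set

private lemma contOn_Ici_of_Icc {f : ℝ → ℝ} {c : ℝ}
    (h : ∀ T, ContinuousOn f (Icc c T)) : ContinuousOn f (Ici c) := by
  intro x hx
  have h1 : ContinuousWithinAt f (Icc c (x + 1)) x := h (x + 1) x ⟨hx, by linarith⟩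
  apply h1.mono_of_mem_nhdsWithin
  rw [← Ici_inter_Iic]
  exact Filter.inter_mem self_mem_nhdsWithin
    (mem_nhdsWithin_of_mem_nhds (Iic_mem_nhds (by linarith)))

/-- Fix `α > 0`, `λ > 0`, and let `H = L²(ℝ₊, e^{-αx}dx)`.  For
`y ∈ H` with `y ≥ 0` a.e. on `ℝ₊`, let `y_λ ∈ H` be an absolutely continuous
solution of `y_λ - λ y_λ' + λ α y_λ = y` with `y_λ' ∈ H`.  Then `y_λ ≥ 0` a.e. on
`ℝ₊`. -/
theorem resolvent_positivity_preserving
    (α lam : ℝ) (hα : 0 < α) (hlam : 0 < lam)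
    (y yl yl' : ℝ → ℝ)
    -- y ∈ L²_{-α} with y ≥ 0 a.e. on ℝ₊
    (hy2 : IntegrableOn (fun x => y x ^ 2 * Real.exp (-(α * x))) (Set.Ici 0))
    (hy0 : ∀ᵐ x ∂(volume.restrict (Set.Ici (0:ℝ))), 0 ≤ y x)
    -- y_λ is absolutely continuous on ℝ₊ with a.e. derivative y_λ'
    (hloc : ∀ x : ℝ, IntegrableOn yl' (Set.Ioc 0 x))
    (hAC : ∀ x : ℝ, 0 ≤ x → yl x = yl 0 + ∫ t in (0:ℝ)..x, yl' t)
    -- y_λ, y_λ' ∈ L²_{-α}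
    (hyl2 : IntegrableOn (fun x => yl x ^ 2 * Real.exp (-(α * x))) (Set.Ici 0))
    (hyl'2 : IntegrableOn (fun x => yl' x ^ 2 * Real.exp (-(α * x))) (Set.Ici 0))
    -- the resolvent equation y_λ - λ y_λ' + λ α y_λ = y a.e. on ℝ₊
    (heq : ∀ᵐ x ∂(volume.restrict (Set.Ici (0:ℝ))),
      yl x - lam * yl' x + lam * α * yl x = y x) :
    ∀ᵐ x ∂(volume.restrict (Set.Ici (0:ℝ))), 0 ≤ yl x := by
  have hβ : (0:ℝ) < α + 1 / lam := by positivity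
  set β : ℝ := α + 1 / lam with hβdef
  have hβne : β ≠ 0 := ne_of_gt hβ
  -- interval integrability of yl' on [a, x] for 0 ≤ a ≤ x
  have hIyl' : ∀ a x : ℝ, 0 ≤ a → a ≤ x → IntervalIntegrable yl' volume a x := by
    intro a x ha hax
    rw [intervalIntegrable_iff_integrableOn_Ioc_of_le hax]
    exact (hloc x).mono_set (Ioc_subset_Ioc_left ha)
  -- continuity of yl on [0, ∞)
  have hylc : ContinuousOn yl (Ici 0) := by
    have hF : ContinuousOn (fun x => yl 0 + ∫ t in (0:ℝ)..x, yl' t) (Ici 0) := by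
      apply continuousOn_const.add
      apply contOn_Ici_of_Icc
      intro T
      rcases le_or_gt 0 T with hT | hT
      · have h2 : IntegrableOn yl' (uIcc 0 T) := by
          rw [uIcc_of_le hT, integrableOn_Icc_iff_integrableOn_Ioc]
          exact hloc T
        have := intervalIntegral.continuousOn_primitive_interval h2
        rwa [uIcc_of_le hT] at this
      · rw [Icc_eq_empty (by linarith)]
        exact continuousOn_empty _
    exact hF.congr fun x hx => hAC x hx
  -- fundamental theorem of calculus between a and x
  have hACax : ∀ a x : ℝ, 0 ≤ a → a ≤ x → yl x = yl a + ∫ t in a..x, yl' t := by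
    intro a x ha hax
    have h1 := hAC a ha
    have h2 := hAC x (le_trans ha hax)
    have h3 := intervalIntegral.integral_add_adjacent_intervals
      (hIyl' 0 a le_rfl ha) (hIyl' a x ha hax)
    rw [h1, h2]
    linarith [h3]
  -- the a.e. differential inequality
  have hae : ∀ᵐ x ∂(volume.restrict (Set.Ici (0:ℝ))), yl' x ≤ β * yl x := by
    filter_upwards [heq, hy0] with x h1 h2
    have hkey : lam * yl' x ≤ lam * (β * yl x) := by
      have h3 : lam * (β * yl x) = yl x + lam * α * yl x := by
        rw [hβdef]; field_simp; ring
      linarith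
    exact (mul_le_mul_iff_right₀ hlam).mp hkey
  -- the main pointwise claim
  have key : ∀ a : ℝ, 0 ≤ a → 0 ≤ yl a := by
    intro a ha
    by_contra hneg
    push_neg at hneg
    set A := yl a with hA
    have hIyl : ∀ x, a ≤ x → IntervalIntegrable yl volume a x := by
      intro x hax
      apply ContinuousOn.intervalIntegrable
      apply hylc.mono
      rw [uIcc_of_le hax]
      exact fun t ht => le_trans ha ht.1
    -- integral inequality
    have hineq : ∀ x, a ≤ x → yl x ≤ A + β * ∫ t in a..x, yl t := by
      intro x hax
      have h1 := hACax a x ha hax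
      have h2 : (∫ t in a..x, yl' t) ≤ ∫ t in a..x, β * yl t := by
        apply intervalIntegral.integral_mono_ae_restrict hax (hIyl' a x ha hax)
          ((hIyl x hax).const_mul β)
        exact ae_restrict_of_ae_restrict_of_subset (fun t ht => le_trans ha ht.1) hae
      rw [intervalIntegral.integral_const_mul] at h2
      linarith
    -- Grönwall
    set v : ℝ → ℝ := fun x => ∫ t in a..x, yl t with hv
    have hvderiv : ∀ x ∈ Ioi a, HasDerivAt v (yl x) x := by
      intro x hx
      have hx0 : (0:ℝ) < x := lt_of_le_of_lt ha hx
      refine intervalIntegral.integral_hasDerivAt_right (hIyl x (le_of_lt hx)) ?_ ?_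
      · exact ContinuousOn.stronglyMeasurableAtFilter isOpen_Ioi
          (hylc.mono (fun t ht => le_of_lt ht)) x hx0
      · exact hylc.continuousAt (Ici_mem_nhds hx0)
    have hvc : ContinuousOn v (Ici a) := by
      apply contOn_Ici_of_Icc
      intro T
      rcases le_or_gt a T with hT | hT
      · have h2 : IntegrableOn yl (uIcc a T) := by
          rw [uIcc_of_le hT]
          exact (hylc.mono (fun t ht => le_trans ha ht.1)).integrableOn_Icc
        have := intervalIntegral.continuousOn_primitive_interval h2
        rwa [uIcc_of_le hT] at this
      · rw [Icc_eq_empty (not_le.mpr hT)]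
        exact continuousOn_empty _
    set w : ℝ → ℝ := fun x => Real.exp (-β * (x - a)) * (v x + A / β) with hw
    have hwderiv : ∀ x ∈ Ioi a,
        HasDerivAt w (Real.exp (-β * (x - a)) * (yl x - β * v x - A)) x := by
      intro x hx
      have he : HasDerivAt (fun s : ℝ => Real.exp (-β * (s - a)))
          (-β * Real.exp (-β * (x - a))) x := by
        have h1 : HasDerivAt (fun s : ℝ => -β * (s - a)) (-β) x := by
          simpa using ((hasDerivAt_id x).sub_const a).const_mul (-β)
        simpa [mul_comm] using h1.exp
      have hva : HasDerivAt (fun s => v s + A / β) (yl x) x := (hvderiv x hx).add_const _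
      have := he.mul hva
      have hb : β * (A / β) = A := by field_simp
      rw [show Real.exp (-β * (x - a)) * (yl x - β * v x - A) = -β * Real.exp (-β * (x - a)) * (v x + A / β) + Real.exp (-β * (x - a)) * yl x by linear_combination (Real.exp (-β * (x - a))) * hb]
      exact this
    have hmono : AntitoneOn w (Ici a) := by
      apply antitoneOn_of_deriv_nonpos (convex_Ici a)
      · apply ContinuousOn.mul
        · exact (Real.continuous_exp.comp (continuous_const.mul (continuous_id.sub continuous_const))).continuousOn
        · exact hvc.add continuousOn_const
      · rw [interior_Ici]
        exact fun x hx => (hwderiv x hx).differentiableAt.differentiableWithinAt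
      · rw [interior_Ici]
        intro x hx
        rw [(hwderiv x hx).deriv]
        have h1 := hineq x (le_of_lt hx)
        have h2 := (Real.exp_pos (-β * (x - a))).le
        nlinarith
    have hwaval : w a = A / β := by
      simp [hw, hv, intervalIntegral.integral_same]
    -- pointwise exponential lower blow-up
    have hyl_bound : ∀ x, a ≤ x → yl x ≤ A * Real.exp (β * (x - a)) := by
      intro x hx
      have h1 : w x ≤ A / β := by
        rw [← hwaval]
        exact hmono self_mem_Ici hx hx
      have hexp : Real.exp (-β * (x - a)) * Real.exp (β * (x - a)) = 1 := by
        rw [← Real.exp_add]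
        norm_num
      have h4 : Real.exp (-β * (x - a)) * (v x + A / β) * Real.exp (β * (x - a))
          ≤ A / β * Real.exp (β * (x - a)) :=
        mul_le_mul_of_nonneg_right h1 (Real.exp_pos _).le
      have h5 : v x + A / β ≤ A / β * Real.exp (β * (x - a)) := by
        calc v x + A / β
            = Real.exp (-β * (x - a)) * (v x + A / β) * Real.exp (β * (x - a)) := by
              rw [mul_comm (Real.exp (-β * (x - a))) (v x + A / β), mul_assoc, hexp, mul_one]
          _ ≤ _ := h4
      have h6 : yl x ≤ A + β * v x := hineq x hx
      have h7 : β * (v x + A / β) ≤ β * (A / β * Real.exp (β * (x - a))) :=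
        mul_le_mul_of_nonneg_left h5 hβ.le
      have h8 : β * (A / β) = A := by field_simp
      have h8' : β * (A / β * Real.exp (β * (x - a))) = A * Real.exp (β * (x - a)) := by
        field_simp
      have h9 : β * v x + A ≤ A * Real.exp (β * (x - a)) := by
        rw [mul_add, h8, h8'] at h7
        exact h7
      linarith [h6, h9]
    -- contradiction with integrability
    have hK : ∀ x, a ≤ x →
        A ^ 2 * Real.exp (-(α * a)) ≤ yl x ^ 2 * Real.exp (-(α * x)) := by
      intro x hx
      have hbx := hyl_bound x hx
      have hE : (0:ℝ) < Real.exp (β * (x - a)) := Real.exp_pos _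
      have hAE : A * Real.exp (β * (x - a)) < 0 := mul_neg_of_neg_of_pos hneg hE
      have h1 : (A * Real.exp (β * (x - a))) ^ 2 ≤ yl x ^ 2 := by nlinarith
      have h2βα : (0:ℝ) < 2 * β - α := by
        rw [hβdef]
        have : (0:ℝ) < 1 / lam := by positivity
        linarith
      have h2 : Real.exp (-(α * a)) ≤ Real.exp (2 * β * (x - a)) * Real.exp (-(α * x)) := by
        rw [← Real.exp_add]
        apply Real.exp_le_exp.mpr
        nlinarith [mul_nonneg h2βα.le (sub_nonneg.mpr hx)]
      have h3 : (A * Real.exp (β * (x - a))) ^ 2 = A ^ 2 * Real.exp (2 * β * (x - a)) := by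
        rw [mul_pow, sq (Real.exp (β * (x - a))), ← Real.exp_add]
        ring_nf
      calc A ^ 2 * Real.exp (-(α * a))
          ≤ A ^ 2 * (Real.exp (2 * β * (x - a)) * Real.exp (-(α * x))) :=
            mul_le_mul_of_nonneg_left h2 (sq_nonneg A)
        _ = (A * Real.exp (β * (x - a))) ^ 2 * Real.exp (-(α * x)) := by rw [h3]; ring
        _ ≤ yl x ^ 2 * Real.exp (-(α * x)) :=
            mul_le_mul_of_nonneg_right h1 (Real.exp_pos _).le
    have hInt : IntegrableOn (fun x => yl x ^ 2 * Real.exp (-(α * x))) (Ici a) :=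
      hyl2.mono_set (Ici_subset_Ici.mpr ha)
    have hconst : Integrable (fun _ : ℝ => A ^ 2 * Real.exp (-(α * a)))
        (volume.restrict (Ici a)) := by
      apply hInt.mono' aestronglyMeasurable_const
      filter_upwards [ae_restrict_mem measurableSet_Ici] with x hx
      have hnn : (0:ℝ) ≤ A ^ 2 * Real.exp (-(α * a)) := by positivity
      rw [Real.norm_eq_abs, abs_of_nonneg hnn]
      exact hK x hx
    rcases integrable_const_iff.mp hconst with h | h
    · have hA2 : (0:ℝ) < A ^ 2 := by nlinarith
      have : (0:ℝ) < A ^ 2 * Real.exp (-(α * a)) := by positivity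
      exact this.ne' h
    · replace h := h.measure_univ_lt_top
      rw [Measure.restrict_apply_univ, Real.volume_Ici] at h
      simp at h
  filter_upwards [ae_restrict_mem measurableSet_Ici] with x hx
  exact key x hx
end
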